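/- arXiv:2505.12271 — 5 statements merged into one kernel-verified Lean document; each statement's English description precedes it below -/
import Mathlib

section
/- Let τ ∈ (0,1) and let p ≥ 0 be an even integer. Define the holomorphic spectral moment of the symplectic elliptic Ginibre ensemble by M^s_τ(p,N) := (1/2)·Σ_{k=0}^{2N−1} A_τ(p,k,k) − (1/2)·Σ_{j=0}^{N−1} ((2N)!!/(2j)!!)·A_τ(p,2N,2j), where (2m)!! := 2^m·m!. Then lim_{N→∞} M^s_τ(p,N) / (2^{p/2}·N^{p/2+1}) = τ^{p/2}·(1/(p/2+1))·binom(p, p/2). -/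
open Finset Filter

/-- `1/n!` for an integer `n`, with the convention that `1/n! = 0` for negative `n`. -/
noncomputable def invfac (n : ℤ) : ℝ := if 0 ≤ n then ((n.toNat).factorial : ℝ)⁻¹ else 0

/-- Binomial coefficient `binom(n, m)` for `n : ℕ`, `m : ℤ`, zero for `m < 0` or `m > n`. -/
noncomputable def zbinom (n : ℕ) (m : ℤ) : ℝ :=
  if 0 ≤ m ∧ m ≤ (n : ℤ) then (n.choose m.toNat : ℝ) else 0

/-- The Hermite expansion coefficients `A_τ(p, j, k)`. -/
noncomputable def Aher (τ : ℝ) (p : ℕ) (j : ℤ) (k : ℕ) : ℝ :=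
  if 0 ≤ j ∧ |j - (k : ℤ)| ≤ (p : ℤ) ∧ (j - (k : ℤ)) % 2 = (p : ℤ) % 2 then
    τ ^ ((((p : ℤ) + k - j) / 2).toNat) *
      ∑ l ∈ Finset.range (p / 2 + 1),
        (p.factorial : ℝ) * ((2 : ℝ) ^ l * (l.factorial : ℝ))⁻¹ *
          invfac (((p : ℤ) - k + j) / 2 - l) *
          zbinom k (((p : ℤ) + k - j) / 2 - l)
  else 0

open Filter

/-- The holomorphic spectral moment `M^s_τ(p, N)` of the symplectic elliptic Ginibre ensemble:
`M^s_τ(p,N) = (1/2) ∑_{k<2N} A_τ(p,k,k) − (1/2) ∑_{j<N} ((2N)!!/(2j)!!) A_τ(p,2N,2j)`,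
where `(2m)!! = 2^m m!`. -/
noncomputable def Msymp (τ : ℝ) (p N : ℕ) : ℝ :=
  (1 / 2) * ∑ k ∈ Finset.range (2 * N), Aher τ p (k : ℤ) k
    - (1 / 2) * ∑ j ∈ Finset.range N,
        (((2 : ℝ) ^ N * (N.factorial : ℝ)) / ((2 : ℝ) ^ j * (j.factorial : ℝ))) *
          Aher τ p ((2 * N : ℕ) : ℤ) (2 * j)

section Aux
open Finset Filter

lemma sum_range_choose' (n m : ℕ) : ∑ k ∈ range n, k.choose m = n.choose (m+1) := by
  induction n with
  | zero => simp
  | succ n ih => rw [sum_range_succ, ih, Nat.choose_succ_succ]; exact Nat.add_comm _ _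

lemma tendsto_choose_two_mul (r : ℕ) :
    Tendsto (fun N : ℕ => (((2*N).choose r : ℕ) : ℝ) / (N:ℝ)^r) atTop
      (nhds ((2:ℝ)^r / r.factorial)) := by
  have h1 : Tendsto (fun N : ℕ => (∏ i ∈ range r, ((2:ℝ) - i / N)) / r.factorial) atTop
      (nhds ((2:ℝ)^r / r.factorial)) := by
    apply Tendsto.div_const
    have h : Tendsto (fun N : ℕ => ∏ i ∈ range r, ((2:ℝ) - i / N)) atTop
        (nhds (∏ _i ∈ range r, (2:ℝ))) := by
      apply tendsto_finset_prod
      intro i _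
      have h0 : Tendsto (fun N : ℕ => (i:ℝ) / N) atTop (nhds 0) :=
        tendsto_const_div_atTop_nhds_zero_nat (i:ℝ)
      simpa using tendsto_const_nhds.sub h0
    simpa [Finset.prod_const] using h
  apply h1.congr'
  filter_upwards [eventually_ge_atTop (max r 1)] with N hN
  have hr : r ≤ N := le_trans (le_max_left _ _) hN
  have hN1 : 1 ≤ N := le_trans (le_max_right _ _) hN
  have hNne : (N:ℝ) ≠ 0 := Nat.cast_ne_zero.mpr (by omega)
  have hd : (((2*N).descFactorial r : ℕ) : ℝ) = ∏ i ∈ range r, ((2*N:ℝ) - i) := by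
    rw [Nat.descFactorial_eq_prod_range, Nat.cast_prod]
    apply Finset.prod_congr rfl
    intro i hi
    have : i ≤ 2*N := by have := mem_range.mp hi; omega
    push_cast [Nat.cast_sub this]
    ring
  have hc : (((2*N).choose r : ℕ) : ℝ) = (∏ i ∈ range r, ((2*N:ℝ) - i)) / r.factorial := by
    rw [← hd, Nat.descFactorial_eq_factorial_mul_choose]
    push_cast
    field_simp
  have hp : ∏ i ∈ range r, ((2:ℝ) - i/N) = (∏ i ∈ range r, ((2*N:ℝ) - i)) / (N:ℝ)^r := by
    rw [show ((N:ℝ))^r = ∏ _i ∈ range r, (N:ℝ) by rw [prod_const, card_range],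
      ← Finset.prod_div_distrib]
    apply Finset.prod_congr rfl
    intro i _
    field_simp
  rw [hp, hc]
  ring

lemma tendsto_choose_two_mul_zero (r s : ℕ) (h : r < s) :
    Tendsto (fun N : ℕ => (((2*N).choose r : ℕ) : ℝ) / (N:ℝ)^s) atTop (nhds 0) := by
  have h2 : Tendsto (fun N : ℕ => (((N:ℝ))^(s-r))⁻¹) atTop (nhds 0) := by
    apply Tendsto.inv_tendsto_atTop
    exact (tendsto_pow_atTop (by omega : s - r ≠ 0)).comp tendsto_natCast_atTop_atTop
  have h3 := (tendsto_choose_two_mul r).mul h2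
  rw [mul_zero] at h3
  apply h3.congr'
  filter_upwards [eventually_ge_atTop 1] with N hN
  have hNne : (N:ℝ) ≠ 0 := Nat.cast_ne_zero.mpr (by omega)
  have : (N:ℝ)^s = (N:ℝ)^r * (N:ℝ)^(s-r) := by
    rw [← pow_add]; congr 1; omega
  rw [this]
  field_simp

lemma zbinom_eq (n : ℕ) (m : ℤ) (hm : 0 ≤ m) : zbinom n m = (n.choose m.toNat : ℝ) := by
  unfold zbinom
  by_cases h : m ≤ (n:ℤ)
  · rw [if_pos ⟨hm, h⟩]
  · rw [if_neg (by tauto), Nat.choose_eq_zero_of_lt (by omega)]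
    simp

lemma Aher_diag (τ : ℝ) (q k : ℕ) :
    Aher τ (2*q) (k:ℤ) k = τ^q * ∑ l ∈ range (q+1),
      ((2*q).factorial : ℝ) * ((2:ℝ)^l * (l.factorial : ℝ))⁻¹ *
        (((q-l).factorial : ℝ))⁻¹ * ((k.choose (q-l) : ℕ) : ℝ) := by
  unfold Aher
  rw [if_pos (by refine ⟨Int.natCast_nonneg k, ?_, ?_⟩ <;> simp only [sub_self, abs_zero] <;> omega)]
  have he : ((((2*q:ℕ):ℤ) + k - k) / 2) = (q:ℤ) := by push_cast; omega
  have he2 : ((((2*q:ℕ):ℤ) - k + k) / 2) = (q:ℤ) := by push_cast; omega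
  have hr : 2*q/2 = q := by omega
  rw [he, he2, hr]
  simp only [Int.toNat_natCast]
  congr 1
  apply Finset.sum_congr rfl
  intro l hl
  have hlq : l ≤ q := by have := mem_range.mp hl; omega
  have h1 : invfac ((q:ℤ) - l) = (((q-l).factorial : ℝ))⁻¹ := by
    unfold invfac
    rw [if_pos (by omega), show ((q:ℤ)-(l:ℤ)).toNat = q-l from by omega]
  have h2 : zbinom k ((q:ℤ) - l) = ((k.choose (q-l) : ℕ) : ℝ) := by
    rw [zbinom_eq _ _ (by omega), show ((q:ℤ)-(l:ℤ)).toNat = q-l from by omega]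
  rw [h1, h2]

lemma S1_eq (τ : ℝ) (q n : ℕ) :
    ∑ k ∈ range n, Aher τ (2*q) (k:ℤ) k = τ^q * ∑ l ∈ range (q+1),
      ((2*q).factorial : ℝ) * ((2:ℝ)^l * (l.factorial : ℝ))⁻¹ *
        (((q-l).factorial : ℝ))⁻¹ * ((n.choose (q-l+1) : ℕ) : ℝ) := by
  simp only [Aher_diag]
  rw [← Finset.mul_sum, Finset.sum_comm]
  congr 1
  apply Finset.sum_congr rfl
  intro l _
  rw [← Finset.mul_sum]
  congr 1
  rw [← Nat.cast_sum, sum_range_choose']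

lemma invfac_nonneg (n : ℤ) : 0 ≤ invfac n := by
  unfold invfac; split <;> positivity

lemma invfac_le_one (n : ℤ) : invfac n ≤ 1 := by
  unfold invfac; split
  · exact inv_le_one_of_one_le₀
      (by exact_mod_cast Nat.one_le_iff_ne_zero.mpr (Nat.factorial_ne_zero _))
  · norm_num

lemma zbinom_nonneg (n : ℕ) (m : ℤ) : 0 ≤ zbinom n m := by
  unfold zbinom; split <;> positivity

lemma zbinom_le_pow (n b e : ℕ) (m : ℤ) (hm : m ≤ (e:ℤ)) (hnb : n ≤ b) (hb : 1 ≤ b) :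
    zbinom n m ≤ (b:ℝ)^e := by
  unfold zbinom; split
  · calc (n.choose m.toNat : ℝ) ≤ ((n^(m.toNat) : ℕ) : ℝ) := by
          exact_mod_cast Nat.choose_le_pow n _
      _ ≤ ((b^(m.toNat) : ℕ) : ℝ) := by
          exact_mod_cast Nat.pow_le_pow_left hnb _
      _ ≤ (b:ℝ)^e := by
          push_cast
          exact pow_le_pow_right₀ (by exact_mod_cast hb) (by omega)
  · positivity

lemma S2_bound (τ : ℝ) (hτ0 : 0 ≤ τ) (hτ1 : τ ≤ 1) (q N : ℕ) (hqN : q ≤ N) (hN1 : 1 ≤ N) :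
    |∑ j ∈ range N, (((2:ℝ)^N * (N.factorial:ℝ))/((2:ℝ)^j * (j.factorial:ℝ))) *
        Aher τ (2*q) ((2*N:ℕ):ℤ) (2*j)|
      ≤ (q : ℝ) * (((q:ℝ)+1) * ((2*q).factorial : ℝ)) * (2*(N:ℝ))^q := by
  have hr : 2*q/2 = q := by omega
  have hz : ∀ j ∈ Ico 0 (N-q), (((2:ℝ)^N * (N.factorial:ℝ))/((2:ℝ)^j * (j.factorial:ℝ))) *
      Aher τ (2*q) ((2*N:ℕ):ℤ) (2*j) = 0 := by
    intro j hj
    have hjlt : j < N - q := (mem_Ico.mp hj).2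
    have : Aher τ (2*q) ((2*N:ℕ):ℤ) (2*j) = 0 := by
      unfold Aher
      rw [if_neg]
      rintro ⟨-, habs, -⟩
      rw [show (((2*N:ℕ):ℤ) - ((2*j:ℕ):ℤ)) = ((2*(N-j) : ℕ) : ℤ) from by push_cast; omega,
        abs_of_nonneg (by positivity)] at habs
      have : (2*(N-j) : ℕ) ≤ 2*q := by exact_mod_cast habs
      omega
    rw [this, mul_zero]
  rw [range_eq_Ico, ← Finset.sum_Ico_consecutive _ (Nat.zero_le (N-q)) (Nat.sub_le N q),
    Finset.sum_eq_zero hz, zero_add]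
  have hcard : (Ico (N-q) N).card = q := by rw [Nat.card_Ico]; omega
  have hbd : ∀ j ∈ Ico (N-q) N,
      |(((2:ℝ)^N * (N.factorial:ℝ))/((2:ℝ)^j * (j.factorial:ℝ))) *
        Aher τ (2*q) ((2*N:ℕ):ℤ) (2*j)|
      ≤ (((q:ℝ)+1) * ((2*q).factorial : ℝ)) * (2*(N:ℝ))^q := by
    intro j hj
    obtain ⟨hj1, hj2⟩ := mem_Ico.mp hj
    set d := N - j with hd
    have hd1 : 1 ≤ d := by omega
    have hdq : d ≤ q := by omega
    have hjN : j ≤ N := by omega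
    have hfacpos : (0:ℝ) < (2:ℝ)^j * (j.factorial:ℝ) := by positivity
    have hfac : ((2:ℝ)^N * (N.factorial:ℝ))/((2:ℝ)^j * (j.factorial:ℝ))
        = 2^d * ((N.descFactorial d : ℕ) : ℝ) := by
      have h := Nat.factorial_mul_descFactorial (show d ≤ N by omega)
      rw [show N - d = j from by omega] at h
      have h2 : ((N.factorial : ℕ) : ℝ) = (j.factorial : ℝ) * ((N.descFactorial d : ℕ) : ℝ) := by
        exact_mod_cast h.symm
      have h3 : (2:ℝ)^N = 2^j * 2^d := by rw [← pow_add]; congr 1; omega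
      rw [h2, h3]
      field_simp
    have hfacle : ((2:ℝ)^N * (N.factorial:ℝ))/((2:ℝ)^j * (j.factorial:ℝ)) ≤ (2*(N:ℝ))^d := by
      rw [hfac, mul_pow]
      apply mul_le_mul_of_nonneg_left _ (by positivity)
      exact_mod_cast Nat.descFactorial_le_pow N d
    have hfacnn : 0 ≤ ((2:ℝ)^N * (N.factorial:ℝ))/((2:ℝ)^j * (j.factorial:ℝ)) := by positivity
    have hA : |Aher τ (2*q) ((2*N:ℕ):ℤ) (2*j)|
        ≤ (((q:ℝ)+1) * ((2*q).factorial : ℝ)) * (2*(N:ℝ))^(q-d) := by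
      unfold Aher
      split
      · rw [hr]
        have hsumnn : ∀ l ∈ range (q+1), (0:ℝ) ≤
            ((2*q).factorial : ℝ) * ((2 : ℝ) ^ l * (l.factorial : ℝ))⁻¹ *
              invfac ((((2*q:ℕ):ℤ) - (2*j:ℕ) + ((2*N:ℕ):ℤ)) / 2 - l) *
              zbinom (2*j) ((((2*q:ℕ):ℤ) + (2*j:ℕ) - ((2*N:ℕ):ℤ)) / 2 - l) := by
          intro l _
          have := invfac_nonneg ((((2*q:ℕ):ℤ) - (2*j:ℕ) + ((2*N:ℕ):ℤ)) / 2 - l)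
          have := zbinom_nonneg (2*j) ((((2*q:ℕ):ℤ) + (2*j:ℕ) - ((2*N:ℕ):ℤ)) / 2 - l)
          positivity
        rw [abs_of_nonneg (by
          apply mul_nonneg (by positivity)
          exact Finset.sum_nonneg hsumnn)]
        have hτle : τ ^ (((((2*q:ℕ):ℤ) + (2*j:ℕ) - ((2*N:ℕ):ℤ)) / 2).toNat) ≤ 1 :=
          pow_le_one₀ hτ0 hτ1
        calc τ ^ (((((2*q:ℕ):ℤ) + (2*j:ℕ) - ((2*N:ℕ):ℤ)) / 2).toNat) *
              ∑ l ∈ range (q+1), ((2*q).factorial : ℝ) * ((2 : ℝ) ^ l * (l.factorial : ℝ))⁻¹ *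
                invfac ((((2*q:ℕ):ℤ) - (2*j:ℕ) + ((2*N:ℕ):ℤ)) / 2 - l) *
                zbinom (2*j) ((((2*q:ℕ):ℤ) + (2*j:ℕ) - ((2*N:ℕ):ℤ)) / 2 - l)
            ≤ 1 * ∑ l ∈ range (q+1), ((2*q).factorial : ℝ) * ((2 : ℝ) ^ l * (l.factorial : ℝ))⁻¹ *
                invfac ((((2*q:ℕ):ℤ) - (2*j:ℕ) + ((2*N:ℕ):ℤ)) / 2 - l) *
                zbinom (2*j) ((((2*q:ℕ):ℤ) + (2*j:ℕ) - ((2*N:ℕ):ℤ)) / 2 - l) := by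
              apply mul_le_mul_of_nonneg_right hτle (Finset.sum_nonneg hsumnn)
          _ ≤ (((q:ℝ)+1) * ((2*q).factorial : ℝ)) * (2*(N:ℝ))^(q-d) := by
              rw [one_mul]
              calc ∑ l ∈ range (q+1), ((2*q).factorial : ℝ) * ((2 : ℝ) ^ l * (l.factorial : ℝ))⁻¹ *
                    invfac ((((2*q:ℕ):ℤ) - (2*j:ℕ) + ((2*N:ℕ):ℤ)) / 2 - l) *
                    zbinom (2*j) ((((2*q:ℕ):ℤ) + (2*j:ℕ) - ((2*N:ℕ):ℤ)) / 2 - l)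
                  ≤ ∑ _l ∈ range (q+1), ((2*q).factorial : ℝ) * (2*(N:ℝ))^(q-d) := by
                    apply Finset.sum_le_sum
                    intro l _
                    have hinv1 : ((2 : ℝ) ^ l * (l.factorial : ℝ))⁻¹ ≤ 1 := by
                      rw [inv_le_one_iff₀]
                      right
                      have h4 : (1:ℝ) ≤ (2:ℝ)^l := one_le_pow₀ (by norm_num)
                      have h5 : (1:ℝ) ≤ (l.factorial : ℝ) := by
                        exact_mod_cast Nat.one_le_iff_ne_zero.mpr (Nat.factorial_ne_zero _)
                      nlinarith
                    have hzb : zbinom (2*j) ((((2*q:ℕ):ℤ) + (2*j:ℕ) - ((2*N:ℕ):ℤ)) / 2 - l)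
                        ≤ (2*(N:ℝ))^(q-d) := by
                      have := zbinom_le_pow (2*j) (2*N) (q-d)
                        ((((2*q:ℕ):ℤ) + (2*j:ℕ) - ((2*N:ℕ):ℤ)) / 2 - l)
                        (by push_cast; omega) (by omega) (by omega)
                      exact_mod_cast this
                    calc ((2*q).factorial : ℝ) * ((2 : ℝ) ^ l * (l.factorial : ℝ))⁻¹ *
                          invfac ((((2*q:ℕ):ℤ) - (2*j:ℕ) + ((2*N:ℕ):ℤ)) / 2 - l) *
                          zbinom (2*j) ((((2*q:ℕ):ℤ) + (2*j:ℕ) - ((2*N:ℕ):ℤ)) / 2 - l)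
                        ≤ ((2*q).factorial : ℝ) * 1 * 1 *
                          zbinom (2*j) ((((2*q:ℕ):ℤ) + (2*j:ℕ) - ((2*N:ℕ):ℤ)) / 2 - l) := by
                          apply mul_le_mul_of_nonneg_right _ (zbinom_nonneg _ _)
                          calc ((2*q).factorial : ℝ) * ((2 : ℝ) ^ l * (l.factorial : ℝ))⁻¹ *
                                invfac ((((2*q:ℕ):ℤ) - (2*j:ℕ) + ((2*N:ℕ):ℤ)) / 2 - l)
                              ≤ ((2*q).factorial : ℝ) * ((2 : ℝ) ^ l * (l.factorial : ℝ))⁻¹ * 1 := by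
                                apply mul_le_mul_of_nonneg_left (invfac_le_one _) (by positivity)
                            _ ≤ ((2*q).factorial : ℝ) * 1 * 1 := by
                                rw [mul_one, mul_one]
                                apply mul_le_mul_of_nonneg_left hinv1 (by positivity)
                      _ ≤ ((2*q).factorial : ℝ) * (2*(N:ℝ))^(q-d) := by
                          rw [mul_one, mul_one]
                          apply mul_le_mul_of_nonneg_left hzb (by positivity)
                _ = (((q:ℝ)+1) * ((2*q).factorial : ℝ)) * (2*(N:ℝ))^(q-d) := by
                    rw [Finset.sum_const, card_range, nsmul_eq_mul]
                    push_cast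
                    ring
      · rw [abs_zero]
        positivity
    calc |(((2:ℝ)^N * (N.factorial:ℝ))/((2:ℝ)^j * (j.factorial:ℝ))) *
          Aher τ (2*q) ((2*N:ℕ):ℤ) (2*j)|
        = (((2:ℝ)^N * (N.factorial:ℝ))/((2:ℝ)^j * (j.factorial:ℝ))) *
          |Aher τ (2*q) ((2*N:ℕ):ℤ) (2*j)| := by
          rw [abs_mul, abs_of_nonneg hfacnn]
      _ ≤ (2*(N:ℝ))^d * ((((q:ℝ)+1) * ((2*q).factorial : ℝ)) * (2*(N:ℝ))^(q-d)) := by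
          apply mul_le_mul hfacle hA (abs_nonneg _) (by positivity)
      _ = (((q:ℝ)+1) * ((2*q).factorial : ℝ)) * (2*(N:ℝ))^q := by
          have hpow : (2*(N:ℝ))^d * (2*(N:ℝ))^(q-d) = (2*(N:ℝ))^q := by
            rw [← pow_add]; congr 1; omega
          rw [← hpow]; ring
  calc |∑ j ∈ Ico (N-q) N, (((2:ℝ)^N * (N.factorial:ℝ))/((2:ℝ)^j * (j.factorial:ℝ))) *
        Aher τ (2*q) ((2*N:ℕ):ℤ) (2*j)|
      ≤ ∑ j ∈ Ico (N-q) N, |(((2:ℝ)^N * (N.factorial:ℝ))/((2:ℝ)^j * (j.factorial:ℝ))) *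
        Aher τ (2*q) ((2*N:ℕ):ℤ) (2*j)| := Finset.abs_sum_le_sum_abs _ _
    _ ≤ (Ico (N-q) N).card • ((((q:ℝ)+1) * ((2*q).factorial : ℝ)) * (2*(N:ℝ))^q) :=
        Finset.sum_le_card_nsmul _ _ _ hbd
    _ = (q : ℝ) * (((q:ℝ)+1) * ((2*q).factorial : ℝ)) * (2*(N:ℝ))^q := by
        rw [hcard, nsmul_eq_mul]
        ring

end Aux

/-- For `τ ∈ (0,1)` and even `p`, the holomorphic spectral moments of the
symplectic elliptic Ginibre ensemble satisfy
`M^s_τ(p,N)/(2^{p/2} N^{p/2+1}) → τ^{p/2} (1/(p/2+1)) binom(p, p/2)` as `N → ∞`. -/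
theorem symplectic_elliptic_holomorphic_moment_limit (τ : ℝ) (hτ0 : 0 < τ) (hτ1 : τ < 1)
    (p : ℕ) (hp : p % 2 = 0) :
    Tendsto (fun N : ℕ => Msymp τ p N / ((2 : ℝ) ^ (p / 2) * (N : ℝ) ^ (p / 2 + 1)))
      atTop (nhds (τ ^ (p / 2) * ((p / 2 + 1 : ℕ) : ℝ)⁻¹ * (p.choose (p / 2) : ℝ))) := by
  obtain ⟨q, rfl⟩ : ∃ q, p = 2*q := ⟨p/2, by omega⟩
  have hr : 2*q/2 = q := by omega
  rw [hr]
  have h1 : Tendsto (fun N : ℕ =>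
      ((1:ℝ)/2 * ∑ k ∈ Finset.range (2*N), Aher τ (2*q) (k:ℤ) k) /
        ((2:ℝ)^q * (N:ℝ)^(q+1))) atTop
      (nhds (τ ^ q * ((q + 1 : ℕ) : ℝ)⁻¹ * ((2*q).choose q : ℝ))) := by
    have hterm : ∀ l ∈ Finset.range (q+1), Tendsto (fun N : ℕ =>
        (τ^q * (((2*q).factorial : ℝ) * ((2:ℝ)^l * (l.factorial : ℝ))⁻¹ *
          (((q-l).factorial : ℝ))⁻¹) / (2 * 2^q)) *
          ((((2*N).choose (q-l+1) : ℕ):ℝ) / (N:ℝ)^(q+1)))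
        atTop (nhds (if l = 0 then
          (τ^q * (((2*q).factorial : ℝ) * ((2:ℝ)^l * (l.factorial : ℝ))⁻¹ *
            (((q-l).factorial : ℝ))⁻¹) / (2 * 2^q)) *
            ((2:ℝ)^(q+1) / ((q+1).factorial : ℝ)) else 0)) := by
      intro l hl
      by_cases hl0 : l = 0
      · subst hl0
        simp only [if_pos rfl, Nat.sub_zero]
        exact (tendsto_choose_two_mul (q+1)).const_mul _
      · rw [if_neg hl0]
        have hlq : l ≤ q := by have := Finset.mem_range.mp hl; omega
        have h := (tendsto_choose_two_mul_zero (q-l+1) (q+1) (by omega)).const_mul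
          (τ^q * (((2*q).factorial : ℝ) * ((2:ℝ)^l * (l.factorial : ℝ))⁻¹ *
            (((q-l).factorial : ℝ))⁻¹) / (2 * 2^q))
        rwa [mul_zero] at h
    have hsum := tendsto_finset_sum _ hterm
    have hval : (∑ l ∈ Finset.range (q+1), (if l = 0 then
          (τ^q * (((2*q).factorial : ℝ) * ((2:ℝ)^l * (l.factorial : ℝ))⁻¹ *
            (((q-l).factorial : ℝ))⁻¹) / (2 * 2^q)) *
            ((2:ℝ)^(q+1) / ((q+1).factorial : ℝ)) else 0))
        = τ ^ q * ((q + 1 : ℕ) : ℝ)⁻¹ * ((2*q).choose q : ℝ) := by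
      rw [Finset.sum_ite_eq' (Finset.range (q+1)) 0,
        if_pos (Finset.mem_range.mpr (by omega))]
      have key := Nat.choose_mul_factorial_mul_factorial (show q ≤ 2*q by omega)
      rw [show 2*q - q = q from by omega] at key
      have keyR : (((2*q).choose q : ℕ) : ℝ) * (q.factorial : ℝ) * (q.factorial : ℝ)
          = ((2*q).factorial : ℝ) := by exact_mod_cast key
      have hfs : ((q+1).factorial : ℝ) = ((q:ℝ)+1) * (q.factorial : ℝ) := by
        rw [Nat.factorial_succ]; push_cast; ring
      have hq1 : (((q+1 : ℕ)) : ℝ) = (q:ℝ)+1 := by push_cast; ring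
      rw [← keyR, hfs, hq1]
      have hfne : (q.factorial : ℝ) ≠ 0 := Nat.cast_ne_zero.mpr (Nat.factorial_ne_zero _)
      have hqne : ((q:ℝ)+1) ≠ 0 := by positivity
      have h2q : (2:ℝ)^(q+1) = 2 * 2^q := by rw [pow_succ]; ring
      rw [h2q]
      simp only [Nat.sub_zero, pow_zero, Nat.factorial_zero, Nat.cast_one]
      field_simp
    rw [hval] at hsum
    apply hsum.congr'
    filter_upwards [eventually_ge_atTop 1] with N hN1
    have hNne : (N:ℝ) ≠ 0 := Nat.cast_ne_zero.mpr (by omega)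
    rw [S1_eq τ q (2*N), Finset.mul_sum, Finset.mul_sum, Finset.sum_div]
    apply Finset.sum_congr rfl
    intro l _
    simp only [div_eq_mul_inv, mul_inv]
    ring
  have h2 : Tendsto (fun N : ℕ =>
      ((1:ℝ)/2 * ∑ j ∈ Finset.range N,
        (((2:ℝ)^N * (N.factorial:ℝ))/((2:ℝ)^j * (j.factorial:ℝ))) *
          Aher τ (2*q) ((2*N:ℕ):ℤ) (2*j)) / ((2:ℝ)^q * (N:ℝ)^(q+1)))
      atTop (nhds 0) := by
    apply squeeze_zero_norm'
      (a := fun N : ℕ => ((q:ℝ) * (((q:ℝ)+1) * ((2*q).factorial:ℝ)) / 2) * (1/(N:ℝ)))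
    · filter_upwards [eventually_ge_atTop (max q 1)] with N hN
      have hq : q ≤ N := le_trans (le_max_left _ _) hN
      have hN1 : 1 ≤ N := le_trans (le_max_right _ _) hN
      have hNne : (N:ℝ) ≠ 0 := Nat.cast_ne_zero.mpr (by omega)
      have hS := S2_bound τ hτ0.le hτ1.le q N hq hN1
      have hD : (0:ℝ) < (2:ℝ)^q * (N:ℝ)^(q+1) := by positivity
      rw [Real.norm_eq_abs, abs_div, abs_of_pos hD, abs_mul,
        abs_of_pos (by norm_num : (0:ℝ) < 1/2)]
      calc (1/2 * |∑ j ∈ Finset.range N,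
            (((2:ℝ)^N * (N.factorial:ℝ))/((2:ℝ)^j * (j.factorial:ℝ))) *
              Aher τ (2*q) ((2*N:ℕ):ℤ) (2*j)|) / ((2:ℝ)^q * (N:ℝ)^(q+1))
          ≤ (1/2 * ((q:ℝ) * (((q:ℝ)+1) * ((2*q).factorial:ℝ)) * (2*(N:ℝ))^q)) /
            ((2:ℝ)^q * (N:ℝ)^(q+1)) := by gcongr
        _ = ((q:ℝ) * (((q:ℝ)+1) * ((2*q).factorial:ℝ)) / 2) * (1/(N:ℝ)) := by
            rw [mul_pow, pow_succ]
            field_simp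
    · have h := tendsto_one_div_atTop_nhds_zero_nat.const_mul
        ((q:ℝ) * (((q:ℝ)+1) * ((2*q).factorial:ℝ)) / 2)
      rwa [mul_zero] at h
  have h3 := h1.sub h2
  rw [sub_zero] at h3
  apply h3.congr
  intro N
  simp only [Msymp, hr]
  rw [sub_div]
end

section
/- Let τ ∈ (0,1), N ≥ 1, and let p1, p2 ≥ 0 be integers. Then the spectral moment of the complex elliptic Ginibre ensemble satisfies the Christoffel–Darboux-type identity M_τ(p1,p2,N) = (1/((1−τ²)·(p1+1))) · Σ_{n=0}^{N+max(p1+1,p2)} (n!/(N−1)!) · [ A_τ(p1+1, n, N−1)·A_τ(p2, n, N) − τ·A_τ(p1+1, n, N)·A_τ(p2, n, N−1) ]. -/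
open Finset Filter

/-- `I_p = {−p, −p+2, …, p−2, p}`, the integers between `−p` and `p` with the parity of `p`. -/
noncomputable def Ip (p : ℕ) : Finset ℤ :=
  (Finset.Icc (-(p : ℤ)) (p : ℤ)).filter fun r => r % 2 = (p : ℤ) % 2

/-- The spectral moment `M_τ(p1, p2, N)` of the complex elliptic Ginibre ensemble. -/
noncomputable def Mell (τ : ℝ) (p1 p2 N : ℕ) : ℝ :=
  ∑ k ∈ Finset.range N,
    ∑ r ∈ (Ip (min p1 p2)).filter (fun r => r ≤ (k : ℤ)),
      ((((k : ℤ) - r).toNat.factorial : ℝ) / (k.factorial : ℝ)) *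
        Aher τ p1 ((k : ℤ) - r) k * Aher τ p2 ((k : ℤ) - r) k

lemma invfac_natCast (n : ℕ) : invfac (n : ℤ) = ((n.factorial : ℝ))⁻¹ := by
  simp [invfac]

lemma invfac_neg {x : ℤ} (h : x < 0) : invfac x = 0 := by
  rw [invfac, if_neg (by omega)]

lemma zbinom_natCast (k m : ℕ) (h : m ≤ k) : zbinom k (m : ℤ) = (k.choose m : ℝ) := by
  rw [zbinom, if_pos ⟨by positivity, by exact_mod_cast h⟩, Int.toNat_natCast]

lemma zbinom_zero_of_neg {k : ℕ} {m : ℤ} (h : m < 0) : zbinom k m = 0 := by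
  rw [zbinom, if_neg (by omega)]

lemma zbinom_zero_of_gt {k : ℕ} {m : ℤ} (h : (k : ℤ) < m) : zbinom k m = 0 := by
  rw [zbinom, if_neg (by omega)]

lemma zbinom_nat_of_gt {k m : ℕ} (h : k < m) : zbinom k (m : ℤ) = 0 :=
  zbinom_zero_of_gt (by exact_mod_cast h)

lemma zbinom_zero (k : ℕ) : zbinom k 0 = 1 := by
  rw [zbinom, if_pos ⟨le_rfl, by positivity⟩]
  simp

lemma invfac_rec (x : ℤ) : invfac (x - 1) = (x : ℝ) * invfac x := by
  by_cases hx : 1 ≤ x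
  · lift x to ℕ using (by omega)
    obtain ⟨y, rfl⟩ : ∃ y : ℕ, x = y + 1 := ⟨x - 1, by omega⟩
    rw [show ((y+1:ℕ) : ℤ) - 1 = ((y:ℕ) : ℤ) by push_cast; ring, invfac_natCast, invfac_natCast,
      Nat.factorial_succ]
    push_cast
    rw [mul_inv]
    have : ((y:ℝ) + 1) ≠ 0 := by positivity
    field_simp
  · by_cases hx0 : x = 0
    · subst hx0; norm_num [invfac_neg]
    · rw [invfac_neg (by omega), invfac_neg (by omega), mul_zero]

lemma zbinom_S2 (k : ℕ) (m : ℤ) : ((k : ℝ) - m) * zbinom k m = ((m:ℝ) + 1) * zbinom k (m + 1) := by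
  by_cases hm : 0 ≤ m
  · lift m to ℕ using hm
    rw [show ((m:ℕ):ℤ) + 1 = ((m+1 : ℕ) : ℤ) by push_cast; ring]
    by_cases hmk : m < k
    · rw [zbinom_natCast k m (by omega), zbinom_natCast k (m+1) (by omega)]
      have hc := Nat.choose_succ_right_eq k m
      have := congrArg (fun z : ℕ => (z : ℝ)) hc
      push_cast [Nat.cast_sub hmk.le] at this
      push_cast
      linarith [this]
    · by_cases he : m = k
      · subst he
        rw [zbinom_nat_of_gt (Nat.lt_succ_self m)]
        push_cast
        ring
      · rw [zbinom_nat_of_gt (by omega), zbinom_nat_of_gt (by omega)]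
        ring
  · rw [zbinom_zero_of_neg (by omega)]
    by_cases hm1 : m = -1
    · subst hm1; norm_num
    · rw [zbinom_zero_of_neg (by omega)]; ring

lemma zbinom_S5 (k : ℕ) (m : ℤ) : (k : ℝ) * zbinom (k-1) (m-1) = (m:ℝ) * zbinom k m := by
  rcases Nat.eq_zero_or_pos k with hk | hk
  · subst hk
    by_cases hm : m = 0
    · subst hm; norm_num
    · have h0 : zbinom 0 m = 0 := by
        rcases lt_or_gt_of_ne hm with h | h
        · exact zbinom_zero_of_neg h
        · exact zbinom_zero_of_gt (by push_cast; omega)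
      rw [h0]
      simp
  · obtain ⟨c, rfl⟩ : ∃ c : ℕ, k = c + 1 := ⟨k - 1, by omega⟩
    simp only [Nat.add_sub_cancel]
    by_cases hm : 1 ≤ m
    · lift m to ℕ using (by omega)
      obtain ⟨d, rfl⟩ : ∃ d : ℕ, m = d + 1 := ⟨m - 1, by omega⟩
      rw [show ((d+1:ℕ) : ℤ) - 1 = ((d:ℕ) : ℤ) by push_cast; ring]
      by_cases hdc : d ≤ c
      · rw [zbinom_natCast c d hdc, zbinom_natCast (c+1) (d+1) (by omega)]
        have hc := Nat.add_one_mul_choose_eq c d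
        have := congrArg (fun z : ℕ => (z : ℝ)) hc
        push_cast at this
        push_cast
        linarith [this]
      · rw [zbinom_nat_of_gt (by omega), zbinom_nat_of_gt (by omega), mul_zero, mul_zero]
    · by_cases hm0 : m = 0
      · subst hm0
        rw [show (0:ℤ) - 1 = -1 by ring, zbinom_zero_of_neg (by norm_num), mul_zero]
        norm_num
      · rw [zbinom_zero_of_neg (by omega), zbinom_zero_of_neg (by omega), mul_zero, mul_zero]

lemma zbinom_pascal (k : ℕ) (m : ℤ) : zbinom (k+1) m = zbinom k m + zbinom k (m-1) := by
  by_cases hm : 1 ≤ m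
  · lift m to ℕ using (by omega)
    obtain ⟨d, rfl⟩ : ∃ d : ℕ, m = d + 1 := ⟨m - 1, by omega⟩
    rw [show ((d+1:ℕ) : ℤ) - 1 = ((d:ℕ) : ℤ) by push_cast; ring]
    by_cases hdk : d + 1 ≤ k
    · rw [zbinom_natCast (k+1) (d+1) (by omega), zbinom_natCast k (d+1) hdk,
        zbinom_natCast k d (by omega)]
      have hc := Nat.choose_succ_succ k d
      have := congrArg (fun z : ℕ => (z : ℝ)) hc
      push_cast at this
      linarith [this]
    · by_cases hdk2 : d ≤ k
      · have hdk3 : d = k := by omega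
        subst hdk3
        rw [zbinom_natCast (d+1) (d+1) le_rfl, zbinom_nat_of_gt (by omega),
          zbinom_natCast d d le_rfl]
        simp
      · rw [zbinom_nat_of_gt (by omega), zbinom_nat_of_gt (by omega), zbinom_nat_of_gt (by omega)]
        ring
  · by_cases hm0 : m = 0
    · subst hm0
      rw [zbinom_zero, zbinom_zero, show (0:ℤ) - 1 = -1 by ring,
        zbinom_zero_of_neg (by norm_num : (-1:ℤ) < 0)]
      ring
    · rw [zbinom_zero_of_neg (by omega), zbinom_zero_of_neg (by omega),
        zbinom_zero_of_neg (by omega)]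
      ring

lemma zbinom_S3 (k : ℕ) (m : ℤ) : (k:ℝ) * zbinom (k-1) m = ((k:ℝ) - m) * zbinom k m := by
  rcases Nat.eq_zero_or_pos k with hk | hk
  · subst hk
    simp only [Nat.cast_zero, zero_mul, zero_sub]
    by_cases hm : m = 0
    · subst hm
      rw [show (0:ℤ) = ((0:ℕ):ℤ) by norm_num, zbinom_natCast 0 0 le_rfl]
      simp
    · by_cases hm0 : 0 ≤ m
      · rw [zbinom_zero_of_gt (by exact_mod_cast (by omega : (0:ℤ) < m))]; ring
      · rw [zbinom_zero_of_neg (by omega)]; ring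
  · obtain ⟨c, rfl⟩ : ∃ c : ℕ, k = c + 1 := ⟨k - 1, by omega⟩
    have hp := zbinom_pascal c m
    have h5 := zbinom_S5 (c+1) m
    simp only [Nat.add_sub_cancel] at h5 ⊢
    rw [hp] at h5 ⊢
    push_cast at h5 ⊢
    ring_nf at h5 ⊢
    linarith [h5]

noncomputable def Wt (p : ℕ) (e : ℤ) (k : ℕ) (l : ℕ) : ℝ :=
  (p.factorial : ℝ) * ((2:ℝ)^l * (l.factorial : ℝ))⁻¹ * invfac ((p:ℤ) - e - l) * zbinom k (e - l)

noncomputable def W (p : ℕ) (e : ℤ) (k : ℕ) : ℝ := ∑ l ∈ range (p+1), Wt p e k l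

lemma Wt_zero_of_gt {p l : ℕ} (e : ℤ) (k : ℕ) (h : p < l) : Wt p e k l = 0 := by
  unfold Wt
  by_cases hz : e - (l:ℤ) < 0
  · rw [zbinom_zero_of_neg hz, mul_zero]
  · rw [invfac_neg (by omega), mul_zero, zero_mul]

lemma W_eq_sum (p : ℕ) (e : ℤ) (k : ℕ) {R : ℕ} (h : p + 1 ≤ R) :
    W p e k = ∑ l ∈ range R, Wt p e k l := by
  rw [W]
  apply Finset.sum_subset (Finset.range_subset_range.2 h)
  intro l _ hl
  have hlp : ¬ l < p + 1 := fun hc => hl (Finset.mem_range.mpr hc)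
  exact Wt_zero_of_gt e k (by omega)

lemma W_zero_neg {p k : ℕ} {e : ℤ} (he : e < 0) : W p e k = 0 := by
  refine Finset.sum_eq_zero fun l _ => ?_
  unfold Wt
  rw [zbinom_zero_of_neg (by omega), mul_zero]

lemma W_zero_gt {p k : ℕ} {e : ℤ} (he : (p:ℤ) < e) : W p e k = 0 := by
  refine Finset.sum_eq_zero fun l _ => ?_
  unfold Wt
  rw [invfac_neg (by omega), mul_zero, zero_mul]

lemma W_zero_big {p k : ℕ} {e : ℤ} (he : (p:ℤ) + k < 2*e) : W p e k = 0 := by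
  refine Finset.sum_eq_zero fun l _ => ?_
  unfold Wt
  by_cases hz : e - (l:ℤ) ≤ k
  · rw [invfac_neg (by omega), mul_zero, zero_mul]
  · rw [zbinom_zero_of_gt (by omega), mul_zero]

lemma Wshift (p k : ℕ) (e : ℤ) :
    ∑ l ∈ range (p+2), (2*(l:ℝ)) * ((p.factorial:ℝ) * ((2:ℝ)^l * (l.factorial:ℝ))⁻¹ *
      invfac ((p:ℤ)+1-e-l) * zbinom k (e-l))
    = ∑ l ∈ range (p+2), (p.factorial:ℝ) * ((2:ℝ)^l * (l.factorial:ℝ))⁻¹ *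
      invfac ((p:ℤ)-e-l) * zbinom k (e-1-l) := by
  rw [Finset.sum_range_succ' _ (p+1), Finset.sum_range_succ _ (p+1)]
  have h0 : (2*((0:ℕ):ℝ)) * ((p.factorial:ℝ) * ((2:ℝ)^(0:ℕ) * ((0:ℕ).factorial:ℝ))⁻¹ *
      invfac ((p:ℤ)+1-e-(0:ℕ)) * zbinom k (e-(0:ℕ))) = 0 := by
    norm_num
  have htop : (p.factorial:ℝ) * ((2:ℝ)^(p+1) * ((p+1).factorial:ℝ))⁻¹ *
      invfac ((p:ℤ)-e-((p+1:ℕ):ℤ)) * zbinom k (e-1-((p+1:ℕ):ℤ)) = 0 := by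
    by_cases hz : e - 1 - ((p+1:ℕ):ℤ) < 0
    · rw [zbinom_zero_of_neg hz, mul_zero]
    · rw [invfac_neg (by push_cast at hz ⊢; omega), mul_zero, zero_mul]
  rw [h0, htop, add_zero, add_zero]
  refine Finset.sum_congr rfl fun l _ => ?_
  have harg1 : (p:ℤ)+1-e-((l+1:ℕ):ℤ) = (p:ℤ)-e-l := by push_cast; ring
  have harg2 : e - ((l+1:ℕ):ℤ) = e-1-l := by push_cast; ring
  rw [harg1, harg2, Nat.factorial_succ]
  push_cast
  rw [pow_succ]
  have h2 : (2:ℝ)^l ≠ 0 := by positivity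
  have h3 : (l.factorial:ℝ) ≠ 0 := by positivity
  have h4 : ((l:ℝ) + 1) ≠ 0 := by positivity
  field_simp

lemma Wi (p k : ℕ) (e : ℤ) :
    W (p+1) e k = W p e k + ((p:ℝ)+k+2-2*e) * W p (e-1) k := by
  rw [W_eq_sum (p+1) e k (le_refl (p+2)), W_eq_sum p e k (by omega : p+1 ≤ p+2),
    W_eq_sum p (e-1) k (by omega : p+1 ≤ p+2), Finset.mul_sum]
  have key : ∀ l ∈ range (p+2),
      Wt (p+1) e k l = (Wt p e k l + ((e:ℝ)-l) * ((p.factorial:ℝ) * ((2:ℝ)^l * (l.factorial:ℝ))⁻¹ *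
        invfac ((p:ℤ)+1-e-l) * zbinom k (e-l)))
      + (2*(l:ℝ)) * ((p.factorial:ℝ) * ((2:ℝ)^l * (l.factorial:ℝ))⁻¹ *
        invfac ((p:ℤ)+1-e-l) * zbinom k (e-l)) := by
    intro l _
    unfold Wt
    have hIF : invfac ((p:ℤ)-e-l) = ((p:ℝ)+1-e-l) * invfac ((p:ℤ)+1-e-l) := by
      rw [show (p:ℤ)-e-l = ((p:ℤ)+1-e-l) - 1 by ring, invfac_rec]
      push_cast
      ring_nf
    have harg : ((p+1:ℕ):ℤ) - e - l = (p:ℤ)+1-e-l := by push_cast; ring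
    rw [harg, Nat.factorial_succ, hIF]
    push_cast
    ring
  rw [Finset.sum_congr rfl key, Finset.sum_add_distrib, Finset.sum_add_distrib, Wshift]
  have key2 : ∀ l ∈ range (p+2),
      ((p:ℝ)+k+2-2*e) * Wt p (e-1) k l
      = ((e:ℝ)-l) * ((p.factorial:ℝ) * ((2:ℝ)^l * (l.factorial:ℝ))⁻¹ *
          invfac ((p:ℤ)+1-e-l) * zbinom k (e-l))
        + (p.factorial:ℝ) * ((2:ℝ)^l * (l.factorial:ℝ))⁻¹ *
          invfac ((p:ℤ)-e-l) * zbinom k (e-1-l) := by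
    intro l _
    unfold Wt
    have hS2 := zbinom_S2 k (e-1-(l:ℤ))
    rw [show e-1-(l:ℤ)+1 = e - l by ring] at hS2
    push_cast at hS2
    have hIF : invfac ((p:ℤ)-e-l) = ((p:ℝ)+1-e-l) * invfac ((p:ℤ)+1-e-l) := by
      rw [show (p:ℤ)-e-l = ((p:ℤ)+1-e-l) - 1 by ring, invfac_rec]
      push_cast
      ring_nf
    have harg : (p:ℤ) - (e-1) - l = (p:ℤ)+1-e-l := by ring
    rw [harg, hIF]
    linear_combination ((p.factorial:ℝ) * ((2:ℝ)^l * (l.factorial:ℝ))⁻¹ *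
      invfac ((p:ℤ)+1-e-l)) * hS2
  rw [Finset.sum_congr rfl key2, Finset.sum_add_distrib]
  ring

lemma Wiii (p k : ℕ) (e : ℤ) :
    ((p:ℝ)+1+k-2*e) * W (p+1) e k = ((p:ℝ)+1) * W p e k + (k:ℝ) * W (p+1) e (k-1) := by
  rw [W_eq_sum (p+1) e k (le_refl (p+2)), W_eq_sum p e k (by omega : p+1 ≤ p+2),
    W_eq_sum (p+1) e (k-1) (le_refl (p+2)), Finset.mul_sum, Finset.mul_sum, Finset.mul_sum,
    ← Finset.sum_add_distrib]
  refine Finset.sum_congr rfl fun l _ => ?_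
  unfold Wt
  have hS3 := zbinom_S3 k (e-(l:ℤ))
  push_cast at hS3
  have hIF : invfac ((p:ℤ)-e-l) = ((p:ℝ)+1-e-l) * invfac ((p:ℤ)+1-e-l) := by
    rw [show (p:ℤ)-e-l = ((p:ℤ)+1-e-l) - 1 by ring, invfac_rec]
    push_cast
    ring_nf
  have harg : ((p+1:ℕ):ℤ) - e - l = (p:ℤ)+1-e-l := by push_cast; ring
  rw [harg, Nat.factorial_succ, hIF]
  push_cast
  linear_combination (-(((p:ℝ)+1) * (p.factorial:ℝ) * ((2:ℝ)^l * (l.factorial:ℝ))⁻¹ *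
    invfac ((p:ℤ)+1-e-l))) * hS3

lemma Wii (p k : ℕ) (e : ℤ) :
    W p e (k+1) = W (p+1) e k - (k:ℝ) * W p (e-1) (k-1) := by
  have step1 : W p e (k+1) = (∑ l ∈ range (p+2), (p.factorial:ℝ) * ((2:ℝ)^l * (l.factorial:ℝ))⁻¹ *
      invfac ((p:ℤ)-e-l) * zbinom k (e-l))
      + ∑ l ∈ range (p+2), (p.factorial:ℝ) * ((2:ℝ)^l * (l.factorial:ℝ))⁻¹ *
      invfac ((p:ℤ)-e-l) * zbinom k (e-1-l) := by
    rw [W_eq_sum p e (k+1) (by omega : p+1 ≤ p+2), ← Finset.sum_add_distrib]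
    refine Finset.sum_congr rfl fun l _ => ?_
    unfold Wt
    rw [zbinom_pascal k (e - (l:ℤ)), show e - (l:ℤ) - 1 = e-1-l by ring]
    ring
  rw [step1, ← Wshift,
    W_eq_sum (p+1) e k (le_refl (p+2)), W_eq_sum p (e-1) (k-1) (by omega : p+1 ≤ p+2),
    Finset.mul_sum, ← Finset.sum_add_distrib, ← Finset.sum_sub_distrib]
  refine Finset.sum_congr rfl fun l _ => ?_
  unfold Wt
  have hS5 := zbinom_S5 k (e-(l:ℤ))
  rw [show e - (l:ℤ) - 1 = e-1-l by ring] at hS5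
  push_cast at hS5
  have hIF : invfac ((p:ℤ)-e-l) = ((p:ℝ)+1-e-l) * invfac ((p:ℤ)+1-e-l) := by
    rw [show (p:ℤ)-e-l = ((p:ℤ)+1-e-l) - 1 by ring, invfac_rec]
    push_cast
    ring_nf
  have harg : ((p+1:ℕ):ℤ) - e - l = (p:ℤ)+1-e-l := by push_cast; ring
  have harg2 : (p:ℤ) - (e-1) - l = (p:ℤ)+1-e-l := by ring
  rw [harg, harg2, Nat.factorial_succ, hIF]
  push_cast
  linear_combination ((p.factorial:ℝ) * ((2:ℝ)^l * (l.factorial:ℝ))⁻¹ *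
    invfac ((p:ℤ)+1-e-l)) * hS5

/-- the normalized form of the Hermite coefficients. -/
noncomputable def B (τ : ℝ) (p : ℕ) (j : ℤ) (k : ℕ) : ℝ :=
  if (j - (k:ℤ)) % 2 = (p:ℤ) % 2 ∧ 0 ≤ (p:ℤ) + k - j then
    τ ^ ((((p:ℤ) + k - j)/2).toNat) * W p (((p:ℤ)+k-j)/2) k
  else 0

lemma Wt_zero_of_half {p l : ℕ} (e : ℤ) (k : ℕ) (h : p < 2*l) : Wt p e k l = 0 := by
  unfold Wt
  by_cases hz : e - (l:ℤ) < 0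
  · rw [zbinom_zero_of_neg hz, mul_zero]
  · rw [invfac_neg (by omega), mul_zero, zero_mul]

lemma B_neg {τ : ℝ} {p k : ℕ} {j : ℤ} (h : j < 0) : B τ p j k = 0 := by
  unfold B
  split_ifs with hc
  · obtain ⟨hpar, _⟩ := hc
    rw [W_zero_big (by omega), mul_zero]
  · rfl

lemma B_big {τ : ℝ} {p k : ℕ} {j : ℤ} (h : (p:ℤ) + k < j) : B τ p j k = 0 := by
  unfold B
  rw [if_neg (fun hc => by omega)]

lemma Aher_eq_B (τ : ℝ) (p : ℕ) (j : ℤ) (k : ℕ) : Aher τ p j k = B τ p j k := by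
  unfold Aher B
  split_ifs with h1 h2 h2
  · -- both conditions hold
    congr 1
    have e2 : ∀ l : ℕ, (p.factorial : ℝ) * ((2:ℝ)^l * (l.factorial : ℝ))⁻¹ *
        invfac (((p:ℤ) - k + j)/2 - l) * zbinom k (((p:ℤ)+k-j)/2 - l)
        = Wt p (((p:ℤ)+k-j)/2) k l := by
      intro l
      unfold Wt
      obtain ⟨_, _, hpar⟩ := h1
      rw [show ((p:ℤ) - k + j)/2 - l = (p:ℤ) - ((p:ℤ)+k-j)/2 - l by omega]
    rw [Finset.sum_congr rfl (fun l _ => e2 l), W]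
    apply Finset.sum_subset (Finset.range_subset_range.2 (by omega : p/2+1 ≤ p+1))
    intro l _ hl
    have hlp : ¬ l < p/2 + 1 := fun hc => hl (Finset.mem_range.mpr hc)
    exact Wt_zero_of_half _ k (by omega)
  · -- Aher cond true, B cond false: impossible
    exfalso
    obtain ⟨hj, habs, hpar⟩ := h1
    have h3 := (abs_le.mp habs).2
    exact h2 ⟨hpar, by omega⟩
  · -- Aher cond false, B cond true: show 0 = τ^e * W
    obtain ⟨hpar, he⟩ := h2
    symm
    by_cases hj : 0 ≤ j
    · by_cases hlow : -(p:ℤ) ≤ j - k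
      · exact absurd ⟨hj, abs_le.mpr ⟨hlow, by omega⟩, hpar⟩ h1
      · rw [W_zero_gt (by omega), mul_zero]
    · rw [W_zero_big (by omega), mul_zero]
  · rfl
lemma tpow (τ : ℝ) {e : ℤ} (h : 1 ≤ e) : τ * τ^((e-1).toNat) = τ^(e.toNat) := by
  rw [show e.toNat = (e-1).toNat + 1 by omega, pow_succ]
  ring

lemma B_Ai (τ : ℝ) (p k : ℕ) (j : ℤ) :
    B τ (p+1) j k = B τ p (j-1) k + τ * ((j:ℝ)+1) * B τ p (j+1) k := by
  unfold B
  split_ifs with h1 h2 h3 h3 h2 h3 h3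
  all_goals push_cast at h1 h2 h3 ⊢
  · -- all three conditions hold
    set E : ℤ := ((p:ℤ)+1+k-j)/2 with hE
    have hEpar : 2*E = (p:ℤ)+1+k-j := by omega
    have r1 : (((p:ℤ)+1) + k - j)/2 = E := by omega
    have r2 : ((p:ℤ) + k - (j-1))/2 = E := by omega
    have r3 : ((p:ℤ) + k - (j+1))/2 = E - 1 := by omega
    rw [r2, r3]
    have hE1 : 1 ≤ E := by omega
    have hW := Wi p k E
    have hj : (j:ℝ) = (p:ℝ)+1+(k:ℝ)-2*(E:ℝ) := by
      have h5 : (j:ℤ) = (p:ℤ)+1+k-2*E := by omega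
      exact_mod_cast congrArg (Int.cast : ℤ → ℝ) h5
    rw [← tpow τ hE1, hj, hW]
    ring
  · -- E = 0 case
    set E : ℤ := ((p:ℤ)+1+k-j)/2 with hE
    have hE0' : E = 0 := by omega
    have r1 : (((p:ℤ)+1) + k - j)/2 = E := by omega
    have r2 : ((p:ℤ) + k - (j-1))/2 = E := by omega
    rw [r2, hE0']
    have hW := Wi p k 0
    rw [W_zero_neg (by norm_num : (0:ℤ)-1 < 0)] at hW
    rw [hW]
    ring
  · exfalso; omega
  · exfalso; omega
  · exfalso; omega
  · exfalso; omega
  · exfalso; omega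
  · ring

lemma B_Aii (τ : ℝ) (q m : ℕ) (j : ℤ) :
    B τ q j (m+1) = B τ (q+1) j m - τ * (m:ℝ) * B τ q j (m-1) := by
  rcases m with _ | m'
  · norm_num
    unfold B
    split_ifs with h1 h2 h2
    all_goals push_cast at h1 h2 ⊢
    · set E : ℤ := ((q:ℤ)+1-j)/2 with hE
      have hEpar : 2*E = (q:ℤ)+1-j := by omega
      have r1 : ((q:ℤ)+1+0-j)/2 = E := by omega
      rw [r1]
      have hW := Wii q 0 E
      norm_num at hW
      rw [hW]
    · exfalso; omega
    · exfalso; omega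
    · rfl
  · unfold B
    have hsub : m' + 1 - 1 = m' := rfl
    rw [hsub]
    split_ifs with h1 h2 h3 h3 h2 h3 h3
    all_goals push_cast at h1 h2 h3 ⊢
    · -- all conditions hold
      set E : ℤ := ((q:ℤ)+m'+2-j)/2 with hE
      have hEpar : 2*E = (q:ℤ)+m'+2-j := by omega
      have r1 : ((q:ℤ) + (m'+1+1) - j)/2 = E := by push_cast; omega
      have r2 : ((q:ℤ)+1+(m'+1)-j)/2 = E := by omega
      have r3 : ((q:ℤ) + m' - j)/2 = E - 1 := by omega
      rw [show ((q:ℤ) + (↑m'+1+1) - j)/2 = E by push_cast; omega,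
        show ((q:ℤ)+1+(↑m'+1)-j)/2 = E by omega,
        show ((q:ℤ) + ↑m' - j)/2 = E - 1 by omega]
      have hE1 : 1 ≤ E := by omega
      have hW := Wii q (m'+1) E
      rw [show m'+1+1 = m'+2 from rfl, show m'+1-1 = m' from rfl] at hW
      rw [← tpow τ hE1, hW]
      push_cast
      ring
    · -- E = 0
      have hz : (q:ℤ)+m'+2-j = 0 := by omega
      rw [show ((q:ℤ) + (↑m'+1+1) - j)/2 = 0 by push_cast; omega,
        show ((q:ℤ)+1+(↑m'+1)-j)/2 = 0 by omega]
      have hW := Wii q (m'+1) 0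
      rw [show m'+1+1 = m'+2 from rfl, show m'+1-1 = m' from rfl,
        W_zero_neg (by norm_num : (0:ℤ)-1 < 0)] at hW
      rw [hW]
      ring
    · exfalso; omega
    · exfalso; omega
    · exfalso; omega
    · exfalso; omega
    · exfalso; omega
    · ring

lemma B_Aiii (τ : ℝ) (b k : ℕ) (j : ℤ) :
    ((j:ℝ)+1) * B τ (b+1) (j+1) k = ((b:ℝ)+1) * B τ b j k + (k:ℝ) * B τ (b+1) j (k-1) := by
  rcases k with _ | k'
  · norm_num
    unfold B
    split_ifs with h1 h2 h2
    all_goals push_cast at h1 h2 ⊢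
    · set E : ℤ := ((b:ℤ)-j)/2 with hE
      have hEpar : 2*E = (b:ℤ)-j := by omega
      rw [show ((b:ℤ)+1+0-(j+1))/2 = E by omega, show ((b:ℤ)+0-j)/2 = E by omega]
      have hW := Wiii b 0 E
      norm_num at hW
      have hj : (j:ℝ) = (b:ℝ)-2*(E:ℝ) := by
        have h5 : (j:ℤ) = (b:ℤ)-2*E := by omega
        exact_mod_cast congrArg (Int.cast : ℤ → ℝ) h5
      rw [hj]
      linear_combination (τ^(E.toNat)) * hW
    · exfalso; omega
    · exfalso; omega
    · ring
  · unfold B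
    have hsub : k' + 1 - 1 = k' := rfl
    rw [hsub]
    split_ifs with h1 h2 h3 h3 h2 h3 h3
    all_goals push_cast at h1 h2 h3 ⊢
    · set E : ℤ := ((b:ℤ)+k'+1-j)/2 with hE
      have hEpar : 2*E = (b:ℤ)+k'+1-j := by omega
      rw [show ((b:ℤ)+1+(↑k'+1)-(j+1))/2 = E by omega,
        show ((b:ℤ)+(↑k'+1)-j)/2 = E by omega,
        show ((b:ℤ)+1+↑k'-j)/2 = E by omega]
      have hW := Wiii b (k'+1) E
      rw [show k'+1-1 = k' from rfl] at hW
      have hj : (j:ℝ) = (b:ℝ)+k'+1-2*(E:ℝ) := by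
        have h5 : (j:ℤ) = (b:ℤ)+k'+1-2*E := by omega
        exact_mod_cast congrArg (Int.cast : ℤ → ℝ) h5
      rw [hj]
      push_cast at hW ⊢
      linear_combination (τ^(E.toNat)) * hW
    · exfalso; omega
    · exfalso; omega
    · exfalso; omega
    · exfalso; omega
    · exfalso; omega
    · exfalso; omega
    · ring

noncomputable def g (τ : ℝ) (a b k m R : ℕ) : ℝ :=
  ∑ n ∈ range R, (n.factorial:ℝ) * B τ a n k * B τ b n m

noncomputable def U (τ : ℝ) (a b k m R : ℕ) : ℝ :=
  ∑ n ∈ range R, ((n+1).factorial:ℝ) * B τ a n k * B τ b ((n:ℤ)+1) m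

lemma g_swap (τ : ℝ) (a b k m R : ℕ) : g τ a b k m R = g τ b a m k R := by
  unfold g
  exact Finset.sum_congr rfl fun n _ => by ring

lemma g_ext (τ : ℝ) (a b k m : ℕ) {R S : ℕ} (h : b + m + 1 ≤ R) (hRS : R ≤ S) :
    g τ a b k m S = g τ a b k m R := by
  unfold g
  symm
  apply Finset.sum_subset (Finset.range_subset_range.2 hRS)
  intro n _ hn
  have hn' : ¬ n < R := fun hc => hn (Finset.mem_range.mpr hc)
  rw [B_big (show (b:ℤ) + m < (n:ℤ) by push_cast; omega), mul_zero]

lemma sum_shift (f : ℕ → ℝ) (S : ℕ) (h0 : f 0 = 0) (h1 : f (S+1) = 0) :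
    ∑ n ∈ range (S+1), f n = ∑ n ∈ range (S+1), f (n+1) := by
  rw [Finset.sum_range_succ' f S, h0, add_zero, Finset.sum_range_succ (fun n => f (n+1)) S, h1,
    add_zero]

lemma K1 (τ : ℝ) (p q k m : ℕ) {R : ℕ} (h : p + k + 2 ≤ R) :
    g τ (p+1) q k m R = U τ p q k m R + τ * U τ q p m k R := by
  obtain ⟨S, rfl⟩ : ∃ S, R = S + 1 := ⟨R - 1, by omega⟩
  have step1 : g τ (p+1) q k m (S+1) =
      (∑ n ∈ range (S+1), (n.factorial:ℝ) * B τ p ((n:ℤ)-1) k * B τ q n m)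
      + τ * ∑ n ∈ range (S+1), ((n+1).factorial:ℝ) * B τ q n m * B τ p ((n:ℤ)+1) k := by
    unfold g
    rw [Finset.mul_sum, ← Finset.sum_add_distrib]
    refine Finset.sum_congr rfl fun n _ => ?_
    rw [B_Ai τ p k (n:ℤ), Nat.factorial_succ]
    push_cast
    ring
  rw [step1]
  have step2 : (∑ n ∈ range (S+1), (n.factorial:ℝ) * B τ p ((n:ℤ)-1) k * B τ q n m)
      = U τ p q k m (S+1) := by
    rw [sum_shift _ S (by rw [B_neg (by norm_num : ((0:ℕ):ℤ)-1 < 0)]; ring)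
      (by rw [B_big (show (p:ℤ)+k < ((S+1:ℕ):ℤ)-1 by push_cast; omega)]; ring)]
    unfold U
    refine Finset.sum_congr rfl fun n _ => ?_
    rw [show (((n+1:ℕ)):ℤ)-1 = (n:ℤ) by push_cast; ring, show (((n+1:ℕ)):ℤ) = (n:ℤ)+1 by push_cast; ring]
  rw [step2]
  rfl

lemma K2 (τ : ℝ) (p q k m : ℕ) {R : ℕ} (h : q + m + 2 ≤ R) :
    g τ p (q+1) k m R = U τ q p m k R + τ * U τ p q k m R := by
  rw [g_swap]
  exact K1 τ q p m k h

lemma U_eq (τ : ℝ) (a b k m R : ℕ) :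
    U τ a (b+1) k m R = ((b:ℝ)+1) * g τ a b k m R + (m:ℝ) * g τ a (b+1) k (m-1) R := by
  unfold U g
  rw [Finset.mul_sum, Finset.mul_sum, ← Finset.sum_add_distrib]
  refine Finset.sum_congr rfl fun n _ => ?_
  have h3 := B_Aiii τ b m (n:ℤ)
  push_cast at h3
  rw [Nat.factorial_succ]
  push_cast
  linear_combination ((n.factorial:ℝ) * B τ a n k) * h3

lemma SL1a (τ : ℝ) (a b k m R : ℕ) :
    g τ a b k (m+1) R = g τ a (b+1) k m R - τ * (m:ℝ) * g τ a b k (m-1) R := by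
  unfold g
  rw [Finset.mul_sum, ← Finset.sum_sub_distrib]
  refine Finset.sum_congr rfl fun n _ => ?_
  rw [B_Aii τ b m (n:ℤ)]
  ring

lemma SL1b (τ : ℝ) (a b k m R : ℕ) :
    g τ a b (k+1) m R = g τ (a+1) b k m R - τ * (k:ℝ) * g τ a b (k-1) m R := by
  unfold g
  rw [Finset.mul_sum, ← Finset.sum_sub_distrib]
  refine Finset.sum_congr rfl fun n _ => ?_
  rw [B_Aii τ a k (n:ℤ)]
  ring

lemma key (τ : ℝ) (p1 p2 : ℕ) : ∀ (M : ℕ) {R : ℕ}, p1 + p2 + 2*M + 8 ≤ R →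
    g τ (p1+1) p2 M (M+1) R - τ * g τ (p1+1) p2 (M+1) M R
    = (1-τ^2) * ((p1:ℝ)+1) * (M.factorial:ℝ) *
      ∑ k ∈ range (M+1), ((k.factorial:ℝ))⁻¹ * g τ p1 p2 k k R := by
  intro M
  induction M with
  | zero =>
    intro R hR
    have s1 := SL1a τ (p1+1) p2 0 0 R
    have s2 := SL1b τ (p1+1) p2 0 0 R
    have k1 := K1 τ (p1+1) p2 0 0 (show (p1+1) + 0 + 2 ≤ R by omega)
    have k2 := K2 τ (p1+1) p2 0 0 (show p2 + 0 + 2 ≤ R by omega)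
    have u1 := U_eq τ p2 p1 0 0 R
    have gs := g_swap τ p2 p1 0 0 R
    norm_num [Finset.sum_range_one] at s1 s2 k1 k2 u1 gs ⊢
    linear_combination s1 - τ*s2 + k2 - τ*k1 + (1-τ^2)*u1 + ((1-τ^2)*((p1:ℝ)+1))*gs
  | succ M ih =>
    intro R hR
    have ihR := ih (show p1 + p2 + 2*M + 8 ≤ R by omega)
    have s1 := SL1a τ (p1+1) p2 (M+1) (M+1) R
    have s2 := SL1b τ (p1+1) p2 (M+1) (M+1) R
    have k1 := K1 τ (p1+1) p2 (M+1) (M+1) (show (p1+1) + (M+1) + 2 ≤ R by omega)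
    have k2 := K2 τ (p1+1) p2 (M+1) (M+1) (show p2 + (M+1) + 2 ≤ R by omega)
    have u1 := U_eq τ p2 p1 (M+1) (M+1) R
    have gs := g_swap τ p2 p1 (M+1) (M+1) R
    have gs2 := g_swap τ p2 (p1+1) (M+1) M R
    rw [show M+1-1 = M from rfl] at s1 s2 u1
    have hfac : ((M+1).factorial : ℝ) = ((M:ℝ)+1) * (M.factorial:ℝ) := by
      rw [Nat.factorial_succ]; push_cast; ring
    have hinv : ((M+1).factorial:ℝ) * (((M+1).factorial:ℝ))⁻¹ = 1 :=
      mul_inv_cancel₀ (by positivity)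
    rw [Finset.sum_range_succ]
    push_cast at s1 s2 u1 ihR ⊢
    linear_combination s1 - τ*s2 + k2 - τ*k1 + (1-τ^2)*u1 + ((1-τ^2)*((p1:ℝ)+1))*gs
      + ((1-τ^2)*((M:ℝ)+1))*gs2 + (((M:ℝ)+1))*ihR
      + (-((1-τ^2)*((p1:ℝ)+1)*(∑ k ∈ range (M+1), ((k.factorial:ℝ))⁻¹ * g τ p1 p2 k k R)))*hfac
      - ((1-τ^2)*((p1:ℝ)+1)*(g τ p1 p2 (M+1) (M+1) R))*hinv

lemma g_eq (τ : ℝ) (a b k m : ℕ) {R S : ℕ} (h1 : b + m + 1 ≤ R) (h2 : b + m + 1 ≤ S) :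
    g τ a b k m R = g τ a b k m S := by
  rw [g_ext τ a b k m (le_refl (b+m+1)) h1, g_ext τ a b k m (le_refl (b+m+1)) h2]

lemma Aher_cond {τ : ℝ} {p k : ℕ} {j : ℤ} (h : Aher τ p j k ≠ 0) :
    0 ≤ j ∧ |j - (k : ℤ)| ≤ (p : ℤ) ∧ (j - (k : ℤ)) % 2 = (p : ℤ) % 2 := by
  by_contra hc
  rw [Aher, if_neg hc] at h
  exact h rfl

lemma Mell_inner (τ : ℝ) (p1 p2 k : ℕ) {R : ℕ} (hR : k + min p1 p2 + 1 ≤ R) :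
    ∑ r ∈ (Ip (min p1 p2)).filter (fun r => r ≤ (k:ℤ)),
      ((((k:ℤ)-r).toNat.factorial:ℝ)/(k.factorial:ℝ)) *
        Aher τ p1 ((k:ℤ)-r) k * Aher τ p2 ((k:ℤ)-r) k
    = ((k.factorial:ℝ))⁻¹ * g τ p1 p2 k k R := by
  have hg : ((k.factorial:ℝ))⁻¹ * g τ p1 p2 k k R
      = ∑ n ∈ range R, ((k.factorial:ℝ))⁻¹ * ((n.factorial:ℝ) * Aher τ p1 (n:ℤ) k * Aher τ p2 (n:ℤ) k) := by
    unfold g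
    rw [Finset.mul_sum]
    exact Finset.sum_congr rfl fun n _ => by rw [Aher_eq_B, Aher_eq_B]
  rw [hg]
  rw [← Finset.sum_filter_ne_zero ((Ip (min p1 p2)).filter (fun r => r ≤ (k:ℤ))),
    ← Finset.sum_filter_ne_zero (range R)]
  refine Finset.sum_nbij' (i := fun r => ((k:ℤ) - r).toNat) (j := fun n => (k:ℤ) - (n:ℤ))
    ?_ ?_ ?_ ?_ ?_
  · -- hi : maps S' into T'
    intro r hr
    simp only [Finset.mem_filter, Finset.mem_range, Ip, Finset.mem_Icc] at hr ⊢
    obtain ⟨⟨⟨⟨hlow, hhigh⟩, hpar⟩, hrk⟩, hne⟩ := hr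
    refine ⟨by omega, ?_⟩
    have harg : ((((k:ℤ) - r).toNat : ℕ) : ℤ) = (k:ℤ) - r := by omega
    rw [harg]
    intro hz
    apply hne
    rw [← hz]
    ring
  · -- hj : maps T' into S'
    intro n hn
    simp only [Finset.mem_filter, Finset.mem_range, Ip, Finset.mem_Icc] at hn ⊢
    obtain ⟨hnR, hne⟩ := hn
    have hA1 : Aher τ p1 (n:ℤ) k ≠ 0 := fun hz => hne (by rw [hz]; ring)
    have hA2 : Aher τ p2 (n:ℤ) k ≠ 0 := fun hz => hne (by rw [hz]; ring)
    obtain ⟨hj1, habs1, hpar1⟩ := Aher_cond hA1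
    obtain ⟨hj2, habs2, hpar2⟩ := Aher_cond hA2
    have h1 := abs_le.mp habs1
    have h2 := abs_le.mp habs2
    refine ⟨⟨⟨⟨by omega, by omega⟩, by omega⟩, by omega⟩, ?_⟩
    have harg : ((k:ℤ) - ((k:ℤ) - (n:ℤ))) = (n:ℤ) := by ring
    rw [harg]
    rw [show ((n:ℤ)).toNat = n by omega]
    intro hz
    apply hne
    rw [← hz]
    ring
  · -- left inverse
    intro r hr
    simp only [Finset.mem_filter, Ip, Finset.mem_Icc] at hr
    obtain ⟨⟨⟨⟨hlow, hhigh⟩, hpar⟩, hrk⟩, hne⟩ := hr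
    show (k:ℤ) - ((((k:ℤ) - r).toNat : ℕ) : ℤ) = r
    omega
  · -- right inverse
    intro n hn
    show ((k:ℤ) - ((k:ℤ) - (n:ℤ))).toNat = n
    omega
  · -- term equality
    intro r hr
    simp only [Finset.mem_filter, Ip, Finset.mem_Icc] at hr
    obtain ⟨⟨⟨⟨hlow, hhigh⟩, hpar⟩, hrk⟩, hne⟩ := hr
    have harg : ((((k:ℤ) - r).toNat : ℕ) : ℤ) = (k:ℤ) - r := by omega
    rw [harg]
    ring


/-- Christoffel–Darboux-type identity for the spectral moments of the complex
elliptic Ginibre ensemble: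
`M_τ(p1,p2,N) = (1/((1−τ²)(p1+1))) ∑_{n=0}^{N+max(p1+1,p2)} (n!/(N−1)!)
  [A_τ(p1+1,n,N−1) A_τ(p2,n,N) − τ A_τ(p1+1,n,N) A_τ(p2,n,N−1)]`. -/
theorem elliptic_moment_CD_identity (τ : ℝ) (hτ0 : 0 < τ) (hτ1 : τ < 1)
    (N : ℕ) (hN : 1 ≤ N) (p1 p2 : ℕ) :
    Mell τ p1 p2 N =
      (1 / ((1 - τ ^ 2) * ((p1 : ℝ) + 1))) *
        ∑ n ∈ Finset.range (N + max (p1 + 1) p2 + 1),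
          ((n.factorial : ℝ) / ((N - 1).factorial : ℝ)) *
            (Aher τ (p1 + 1) (n : ℤ) (N - 1) * Aher τ p2 (n : ℤ) N
              - τ * Aher τ (p1 + 1) (n : ℤ) N * Aher τ p2 (n : ℤ) (N - 1)) := by

  obtain ⟨M, rfl⟩ : ∃ M, N = M + 1 := ⟨N - 1, by omega⟩
  rw [show M + 1 - 1 = M from rfl]
  set R : ℕ := p1 + p2 + 2*M + 8 with hRdef
  set R₀ : ℕ := M + 1 + max (p1 + 1) p2 + 1 with hR0def
  have hL : Mell τ p1 p2 (M+1) = ∑ k ∈ range (M+1), ((k.factorial:ℝ))⁻¹ * g τ p1 p2 k k R := by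
    unfold Mell
    refine Finset.sum_congr rfl fun k hk => ?_
    have hk' : k < M + 1 := Finset.mem_range.mp hk
    exact Mell_inner τ p1 p2 k (by omega)
  have hsum : ∑ n ∈ Finset.range R₀,
        ((n.factorial : ℝ) / ((M).factorial : ℝ)) *
          (Aher τ (p1 + 1) (n : ℤ) M * Aher τ p2 (n : ℤ) (M+1)
            - τ * Aher τ (p1 + 1) (n : ℤ) (M+1) * Aher τ p2 (n : ℤ) M)
      = ((M.factorial:ℝ))⁻¹ * (g τ (p1+1) p2 M (M+1) R₀ - τ * g τ (p1+1) p2 (M+1) M R₀) := by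
    unfold g
    rw [Finset.mul_sum, ← Finset.sum_sub_distrib, Finset.mul_sum]
    refine Finset.sum_congr rfl fun n _ => ?_
    rw [Aher_eq_B, Aher_eq_B, Aher_eq_B, Aher_eq_B]
    ring
  have hg1 : g τ (p1+1) p2 M (M+1) R₀ = g τ (p1+1) p2 M (M+1) R :=
    g_eq τ (p1+1) p2 M (M+1) (by omega) (by omega)
  have hg2 : g τ (p1+1) p2 (M+1) M R₀ = g τ (p1+1) p2 (M+1) M R :=
    g_eq τ (p1+1) p2 (M+1) M (by omega) (by omega)
  have hkey := key τ p1 p2 M (R := R) (by omega)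
  rw [hL, hsum, hg1, hg2, hkey]
  have h1 : (1 - τ^2) ≠ 0 := by nlinarith
  have h2 : ((p1:ℝ)+1) ≠ 0 := by positivity
  have h3 : (M.factorial:ℝ) ≠ 0 := by positivity
  field_simp
end

section
/- Let τ ∈ [0,1) and let p1, p2 ≥ 0 be integers with p1 + p2 even. Let S := {(x,y) ∈ ℝ² : (x/(1+τ))² + (y/(1−τ))² ≤ 1} be the closed ellipse with semi-axes 1+τ and 1−τ. Then (1/(π·(1−τ²))) · ∫∫_S (x+iy)^{p1}·(x−iy)^{p2} dx dy = C1(p1,p2). In other words, the mixed moments of the elliptic law, the uniform probability measure on S, are given by C1(p1,p2). -/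
open Finset MeasureTheory
open Set

/-- The mixed moments `C1(p1, p2)` of the elliptic law:
`C1(p1,p2) = (1/((p1+p2)/2+1)) ∑_{r ∈ I_{min(p1,p2)}} τ^{(p1+p2)/2+r}
  binom(p1,(p1+r)/2) binom(p2,(p2+r)/2)`. -/
noncomputable def C1 (τ : ℝ) (p1 p2 : ℕ) : ℝ :=
  (((p1 + p2) / 2 + 1 : ℕ) : ℝ)⁻¹ *
    ∑ r ∈ Ip (min p1 p2),
      τ ^ (((((p1 : ℤ) + p2) / 2) + r).toNat) *
        zbinom p1 (((p1 : ℤ) + r) / 2) * zbinom p2 (((p2 : ℤ) + r) / 2)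

lemma diskD_measurable : MeasurableSet {q : ℝ × ℝ | q.1 ^ 2 + q.2 ^ 2 ≤ 1} := by
  apply measurableSet_le <;> fun_prop

lemma diskD_compact : IsCompact {q : ℝ × ℝ | q.1 ^ 2 + q.2 ^ 2 ≤ 1} := by
  apply IsCompact.of_isClosed_subset
    ((isCompact_Icc (a := (-1:ℝ)) (b := 1)).prod (isCompact_Icc (a := (-1:ℝ)) (b := 1)))
  · apply isClosed_le <;> fun_prop
  · rintro ⟨x, y⟩ h
    simp only [Set.mem_setOf_eq] at h
    simp only [Set.mem_prod, Set.mem_Icc]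
    refine ⟨⟨?_, ?_⟩, ⟨?_, ?_⟩⟩ <;> nlinarith [sq_nonneg x, sq_nonneg y]

lemma disk_moment (a b : ℕ) :
    ∫ q : ℝ × ℝ in {q : ℝ × ℝ | q.1 ^ 2 + q.2 ^ 2 ≤ 1},
      ((q.1 : ℂ) + (q.2 : ℂ) * Complex.I) ^ a * ((q.1 : ℂ) - (q.2 : ℂ) * Complex.I) ^ b
      = if a = b then ((Real.pi / (a + 1) : ℝ) : ℂ) else 0 := by
  set D := {q : ℝ × ℝ | q.1 ^ 2 + q.2 ^ 2 ≤ 1}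
  set g : ℝ × ℝ → ℂ := fun q =>
    ((q.1 : ℂ) + (q.2 : ℂ) * Complex.I) ^ a * ((q.1 : ℂ) - (q.2 : ℂ) * Complex.I) ^ b with hg
  rw [← integral_indicator diskD_measurable, ← integral_comp_polarCoord_symm (D.indicator g)]
  have key : ∀ p ∈ polarCoord.target,
      p.1 • (D.indicator g) (polarCoord.symm p) =
        ((Set.Ioc (0:ℝ) 1).indicator (fun r => r ^ (a + b + 1)) p.1)
          • Complex.exp (((a : ℂ) - b) * Complex.I * p.2) := by
    rintro ⟨r, θ⟩ hp
    rw [polarCoord_target] at hp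
    obtain ⟨hr, hθ⟩ := hp
    simp only [Set.mem_Ioi] at hr
    have hmem : polarCoord.symm (r, θ) ∈ D ↔ r ∈ Set.Ioc (0:ℝ) 1 := by
      simp only [polarCoord_symm_apply, D, Set.mem_setOf_eq, Set.mem_Ioc]
      constructor
      · intro h
        refine ⟨hr, ?_⟩
        nlinarith [Real.sin_sq_add_cos_sq θ, sq_nonneg (r-1), sq_nonneg r]
      · intro ⟨_, h1⟩
        nlinarith [Real.sin_sq_add_cos_sq θ, sq_nonneg r]
    have hval : g (polarCoord.symm (r, θ)) =
        (r : ℂ) ^ (a + b) * Complex.exp (((a : ℂ) - b) * Complex.I * θ) := by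
      have h1 : ((r * Real.cos θ : ℝ) : ℂ) + ((r * Real.sin θ : ℝ) : ℂ) * Complex.I
          = (r : ℂ) * Complex.exp ((θ : ℂ) * Complex.I) := by
        rw [Complex.exp_mul_I]; push_cast; ring
      have h2 : ((r * Real.cos θ : ℝ) : ℂ) - ((r * Real.sin θ : ℝ) : ℂ) * Complex.I
          = (r : ℂ) * Complex.exp ((-θ : ℂ) * Complex.I) := by
        rw [Complex.exp_mul_I, Complex.cos_neg, Complex.sin_neg]; push_cast; ring
      simp only [hg, polarCoord_symm_apply, h1, h2, mul_pow]
      rw [← Complex.exp_nat_mul, ← Complex.exp_nat_mul, pow_add]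
      have : Complex.exp (↑a * ((θ : ℂ) * Complex.I)) * Complex.exp (↑b * ((-θ : ℂ) * Complex.I))
          = Complex.exp (((a : ℂ) - b) * Complex.I * θ) := by
        rw [← Complex.exp_add]; congr 1; ring
      calc (r:ℂ)^a * Complex.exp (↑a * ((θ:ℂ) * Complex.I)) *
            ((r:ℂ)^b * Complex.exp (↑b * ((-θ:ℂ) * Complex.I)))
          = (r:ℂ)^a * (r:ℂ)^b * (Complex.exp (↑a * ((θ:ℂ) * Complex.I)) *
            Complex.exp (↑b * ((-θ:ℂ) * Complex.I))) := by ring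
        _ = _ := by rw [this]
    by_cases hD : polarCoord.symm (r, θ) ∈ D
    · rw [Set.indicator_of_mem hD, Set.indicator_of_mem (hmem.1 hD), hval]
      rw [Complex.real_smul, Complex.real_smul, pow_succ]
      push_cast
      ring
    · rw [Set.indicator_of_notMem hD, Set.indicator_of_notMem (fun h => hD (hmem.2 h))]
      simp
  rw [setIntegral_congr_fun polarCoord.open_target.measurableSet key]
  rw [polarCoord_target, Measure.volume_eq_prod, ← Measure.prod_restrict,
    integral_prod_smul (fun r => (Set.Ioc (0:ℝ) 1).indicator (fun r => r ^ (a+b+1)) r)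
      (fun θ : ℝ => Complex.exp (((a:ℂ) - b) * Complex.I * (θ:ℂ)))]
  have hrad : (∫ r in Set.Ioi (0:ℝ), (Set.Ioc (0:ℝ) 1).indicator (fun r => r ^ (a+b+1)) r)
      = (1 / (a + b + 2) : ℝ) := by
    rw [setIntegral_indicator measurableSet_Ioc,
      Set.inter_eq_self_of_subset_right Set.Ioc_subset_Ioi_self]
    rw [← intervalIntegral.integral_of_le (by norm_num : (0:ℝ) ≤ 1), integral_pow]
    push_cast
    norm_num
    ring
  rw [hrad]
  by_cases hab : a = b
  · subst hab
    simp only [sub_self, zero_mul, Complex.exp_zero, if_true]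
    rw [setIntegral_const]
    simp only [measureReal_def, Real.volume_Ioo, smul_eq_mul, mul_one]
    rw [ENNReal.toReal_ofReal (by linarith [Real.pi_pos] : (0:ℝ) ≤ Real.pi - -Real.pi)]
    rw [Complex.real_smul, Complex.real_smul, mul_one]
    have hne : ((a:ℂ) + 1) ≠ 0 := Nat.cast_add_one_ne_zero a
    have hne2 : ((a:ℂ) + a + 2) ≠ 0 := by
      intro h
      have h2 : ((2*a+2 : ℕ) : ℂ) = 0 := by push_cast; linear_combination h
      exact Nat.cast_ne_zero.mpr (by omega) h2
    push_cast
    field_simp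
    have hne3 : ((a:ℂ)*(1+1)+2) ≠ 0 := by rw [show ((a:ℂ)*(1+1)+2) = a + a + 2 by ring]; exact hne2
    rw [div_eq_one_iff_eq hne3]
    ring
  · rw [if_neg hab]
    have hn : ((a : ℂ) - b) * Complex.I ≠ 0 := by
      refine mul_ne_zero ?_ Complex.I_ne_zero
      rw [sub_ne_zero]
      exact fun h => hab (Nat.cast_injective h)
    have : (∫ θ in Set.Ioo (-Real.pi) Real.pi, Complex.exp (((a:ℂ) - b) * Complex.I * θ)) = 0 := by
      rw [← integral_Ioc_eq_integral_Ioo,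
        ← intervalIntegral.integral_of_le (by linarith [Real.pi_pos] : -Real.pi ≤ Real.pi),
        integral_exp_mul_complex hn]
      have heq : Complex.exp (((a:ℂ) - b) * Complex.I * ↑Real.pi)
          = Complex.exp (((a:ℂ) - b) * Complex.I * ↑(-Real.pi)) := by
        calc Complex.exp (((a:ℂ) - b) * Complex.I * ↑Real.pi)
            = Complex.exp ((Int.cast ((a:ℤ) - (b:ℤ)) : ℂ) * (2 * ↑Real.pi * Complex.I)) *
              Complex.exp (((a:ℂ) - b) * Complex.I * ↑(-Real.pi)) := by
              rw [← Complex.exp_add]; congr 1; push_cast; ring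
          _ = _ := by rw [Complex.exp_int_mul_two_pi_mul_I, one_mul]
      rw [heq, sub_self, zero_div]
    rw [this, smul_zero]


lemma diskD_measurable' : MeasurableSet {q : ℝ × ℝ | q.1 ^ 2 + q.2 ^ 2 ≤ 1} := by
  apply measurableSet_le <;> fun_prop

lemma ellipse_eq_image (a b : ℝ) (ha : 0 < a) (hb : 0 < b) :
    {q : ℝ × ℝ | (q.1 / a) ^ 2 + (q.2 / b) ^ 2 ≤ 1}
      = (fun q : ℝ × ℝ => (a * q.1, b * q.2)) '' {q : ℝ × ℝ | q.1 ^ 2 + q.2 ^ 2 ≤ 1} := by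
  ext ⟨x, y⟩
  simp only [Set.mem_setOf_eq, Set.mem_image, Prod.exists, Prod.mk.injEq]
  constructor
  · intro h
    exact ⟨x / a, y / b, h, by field_simp, by field_simp⟩
  · rintro ⟨u, v, h, rfl, rfl⟩
    have h1 : a * u / a = u := by field_simp
    have h2 : b * v / b = v := by field_simp
    rw [h1, h2]
    exact h

lemma ellipse_integral (a b : ℝ) (ha : 0 < a) (hb : 0 < b) (g : ℝ × ℝ → ℂ) :
    ∫ q in {q : ℝ × ℝ | (q.1 / a) ^ 2 + (q.2 / b) ^ 2 ≤ 1}, g q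
      = (a * b) • ∫ q in {q : ℝ × ℝ | q.1 ^ 2 + q.2 ^ 2 ≤ 1}, g (a * q.1, b * q.2) := by
  have hL : ∀ x : ℝ × ℝ, HasFDerivAt (fun q : ℝ × ℝ => (a * q.1, b * q.2))
      (LinearMap.toContinuousLinearMap (Matrix.toLin (Module.Basis.finTwoProd ℝ) (Module.Basis.finTwoProd ℝ)
        !![a, 0; 0, b])) x := by
    intro x
    rw [Matrix.toLin_finTwoProd_toContinuousLinearMap]
    simp only [zero_smul, add_zero, zero_add]
    exact ((hasFDerivAt_fst (𝕜 := ℝ) (p := x)).const_mul a).prodMk ((hasFDerivAt_snd (𝕜 := ℝ) (p := x)).const_mul b)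
  have hdet : (LinearMap.toContinuousLinearMap (Matrix.toLin (Module.Basis.finTwoProd ℝ)
      (Module.Basis.finTwoProd ℝ) !![a, 0; 0, b])).det = a * b := by
    simp only [LinearMap.det_toContinuousLinearMap, LinearMap.det_toLin,
      Matrix.det_fin_two_of]
    ring
  have hinj : Set.InjOn (fun q : ℝ × ℝ => (a * q.1, b * q.2))
      {q : ℝ × ℝ | q.1 ^ 2 + q.2 ^ 2 ≤ 1} := by
    rintro ⟨u, v⟩ _ ⟨u', v'⟩ _ h
    simp only [Prod.mk.injEq] at h
    have h1 : u = u' := mul_left_cancel₀ ha.ne' h.1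
    have h2 : v = v' := mul_left_cancel₀ hb.ne' h.2
    simp [h1, h2]
  rw [ellipse_eq_image a b ha hb,
    integral_image_eq_integral_abs_det_fderiv_smul volume diskD_measurable'
      (fun x _ => (hL x).hasFDerivWithinAt) hinj g]
  simp only [hdet, abs_of_pos (mul_pos ha hb)]
  rw [integral_smul]

lemma sum_pairs_eq (τ : ℝ) (p1 p2 : ℕ) (hpar : p1 % 2 = p2 % 2) :
    ∑ j ∈ range (p1+1), ∑ k ∈ range (p2+1),
      (if j + (p2 - k) = (p1 - j) + k then
        (p1.choose j : ℝ) * p2.choose k * τ ^ ((p1 - j) + (p2 - k)) *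
          (((j + (p2 - k) : ℕ) : ℝ) + 1)⁻¹ else 0)
    = C1 τ p1 p2 := by
  rw [C1, Finset.mul_sum, ← Finset.sum_product', ← Finset.sum_filter]
  refine Finset.sum_nbij' (i := fun x : ℕ × ℕ => (p1 : ℤ) - 2 * x.1)
    (j := fun r : ℤ => ((((p1:ℤ) - r)/2).toNat, (((p2:ℤ) - r)/2).toNat))
    ?_ ?_ ?_ ?_ ?_
  · rintro ⟨j, k⟩ hx
    simp only [Finset.mem_filter, Finset.mem_product, Finset.mem_range] at hx
    obtain ⟨⟨hj, hk⟩, hcond⟩ := hx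
    simp only [Ip, Finset.mem_filter, Finset.mem_Icc]
    omega
  · rintro r hr
    simp only [Ip, Finset.mem_filter, Finset.mem_Icc] at hr
    simp only [Finset.mem_filter, Finset.mem_product, Finset.mem_range]
    omega
  · rintro ⟨j, k⟩ hx
    simp only [Finset.mem_filter, Finset.mem_product, Finset.mem_range] at hx
    simp only [Prod.mk.injEq]
    omega
  · rintro r hr
    simp only [Ip, Finset.mem_filter, Finset.mem_Icc] at hr
    dsimp only
    omega
  · rintro ⟨j, k⟩ hx
    simp only [Finset.mem_filter, Finset.mem_product, Finset.mem_range] at hx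
    obtain ⟨⟨hj, hk⟩, hcond⟩ := hx
    have hj' : j ≤ p1 := by omega
    have hk' : k ≤ p2 := by omega
    have e1 : ((p1:ℤ) + ((p1:ℤ) - 2 * j)) / 2 = ((p1 - j : ℕ) : ℤ) := by omega
    have e2 : ((p2:ℤ) + ((p1:ℤ) - 2 * j)) / 2 = ((p2 - k : ℕ) : ℤ) := by omega
    have e3 : ((((p1 : ℤ) + p2) / 2) + ((p1:ℤ) - 2 * j)).toNat = (p1 - j) + (p2 - k) := by
      omega
    have e4 : (j + (p2 - k)) = (p1 + p2) / 2 := by omega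
    rw [e1, e2, e3, e4, zbinom, zbinom]
    rw [if_pos ⟨Int.natCast_nonneg _, by exact_mod_cast Nat.sub_le p1 j⟩,
      if_pos ⟨Int.natCast_nonneg _, by exact_mod_cast Nat.sub_le p2 k⟩]
    rw [Int.toNat_natCast, Int.toNat_natCast, Nat.choose_symm hj', Nat.choose_symm hk']
    push_cast
    ring

/-- Mixed moments of the elliptic law: for `τ ∈ [0,1)` and `p1 + p2` even,
`(1/(π(1−τ²))) ∫∫_S (x+iy)^{p1} (x−iy)^{p2} dx dy = C1(p1,p2)`, where `S` is the closed ellipse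
with semi-axes `1+τ` and `1−τ`. -/
theorem elliptic_law_mixed_moments (τ : ℝ) (hτ0 : 0 ≤ τ) (hτ1 : τ < 1)
    (p1 p2 : ℕ) (hpar : p1 % 2 = p2 % 2) :
    ((1 / (Real.pi * (1 - τ ^ 2)) : ℝ) : ℂ) *
        ∫ q : ℝ × ℝ in {q : ℝ × ℝ | (q.1 / (1 + τ)) ^ 2 + (q.2 / (1 - τ)) ^ 2 ≤ 1},
          ((q.1 : ℂ) + (q.2 : ℂ) * Complex.I) ^ p1 * ((q.1 : ℂ) - (q.2 : ℂ) * Complex.I) ^ p2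
      = ((C1 τ p1 p2 : ℝ) : ℂ) := by
  have ha : 0 < 1 + τ := by linarith
  have hb : 0 < 1 - τ := by linarith
  rw [ellipse_integral (1+τ) (1-τ) ha hb]
  set D := {q : ℝ × ℝ | q.1 ^ 2 + q.2 ^ 2 ≤ 1} with hD
  have hpt : ∀ q : ℝ × ℝ,
      ((((1+τ) * q.1 : ℝ) : ℂ) + (((1-τ) * q.2 : ℝ) : ℂ) * Complex.I) ^ p1 *
        ((((1+τ) * q.1 : ℝ) : ℂ) - (((1-τ) * q.2 : ℝ) : ℂ) * Complex.I) ^ p2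
      = (∑ j ∈ range (p1+1), ((q.1:ℂ) + (q.2:ℂ)*Complex.I) ^ j *
           ((τ:ℂ) * ((q.1:ℂ) - (q.2:ℂ)*Complex.I)) ^ (p1 - j) * (p1.choose j : ℂ)) *
        (∑ k ∈ range (p2+1), ((q.1:ℂ) - (q.2:ℂ)*Complex.I) ^ k *
           ((τ:ℂ) * ((q.1:ℂ) + (q.2:ℂ)*Complex.I)) ^ (p2 - k) * (p2.choose k : ℂ)) := by
    intro q
    rw [← add_pow, ← add_pow]
    have e1 : ((q.1:ℂ) + (q.2:ℂ)*Complex.I) + (τ:ℂ) * ((q.1:ℂ) - (q.2:ℂ)*Complex.I)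
        = (((1+τ) * q.1 : ℝ) : ℂ) + (((1-τ) * q.2 : ℝ) : ℂ) * Complex.I := by
      push_cast; ring
    have e2 : ((q.1:ℂ) - (q.2:ℂ)*Complex.I) + (τ:ℂ) * ((q.1:ℂ) + (q.2:ℂ)*Complex.I)
        = (((1+τ) * q.1 : ℝ) : ℂ) - (((1-τ) * q.2 : ℝ) : ℂ) * Complex.I := by
      push_cast; ring
    rw [e1, e2]
  simp_rw [hpt, Finset.sum_mul_sum]
  have hcont : ∀ (j k : ℕ), Continuous (fun q : ℝ × ℝ =>
      ((q.1:ℂ) + (q.2:ℂ)*Complex.I) ^ j * ((τ:ℂ) * ((q.1:ℂ) - (q.2:ℂ)*Complex.I)) ^ (p1 - j) *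
        (p1.choose j : ℂ) *
      (((q.1:ℂ) - (q.2:ℂ)*Complex.I) ^ k * ((τ:ℂ) * ((q.1:ℂ) + (q.2:ℂ)*Complex.I)) ^ (p2 - k) *
        (p2.choose k : ℂ))) := by
    intro j k
    fun_prop
  have hint : ∀ (j k : ℕ), IntegrableOn (fun q : ℝ × ℝ =>
      ((q.1:ℂ) + (q.2:ℂ)*Complex.I) ^ j * ((τ:ℂ) * ((q.1:ℂ) - (q.2:ℂ)*Complex.I)) ^ (p1 - j) *
        (p1.choose j : ℂ) *
      (((q.1:ℂ) - (q.2:ℂ)*Complex.I) ^ k * ((τ:ℂ) * ((q.1:ℂ) + (q.2:ℂ)*Complex.I)) ^ (p2 - k) *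
        (p2.choose k : ℂ))) D := fun j k =>
    (hcont j k).continuousOn.integrableOn_compact diskD_compact
  rw [integral_finset_sum _ (fun j _ => integrable_finset_sum _ (fun k _ => hint j k))]
  have hterm : ∀ j ∈ range (p1+1), ∀ k ∈ range (p2+1),
      (∫ q : ℝ × ℝ in D,
        ((q.1:ℂ) + (q.2:ℂ)*Complex.I) ^ j * ((τ:ℂ) * ((q.1:ℂ) - (q.2:ℂ)*Complex.I)) ^ (p1 - j) *
          (p1.choose j : ℂ) *
        (((q.1:ℂ) - (q.2:ℂ)*Complex.I) ^ k * ((τ:ℂ) * ((q.1:ℂ) + (q.2:ℂ)*Complex.I)) ^ (p2 - k) *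
          (p2.choose k : ℂ)))
      = ((Real.pi * (if j + (p2 - k) = (p1 - j) + k then
            (p1.choose j : ℝ) * p2.choose k * τ ^ ((p1 - j) + (p2 - k)) *
              (((j + (p2 - k) : ℕ) : ℝ) + 1)⁻¹ else 0) : ℝ) : ℂ) := by
    intro j hj k hk
    have hre : ∀ q : ℝ × ℝ,
        ((q.1:ℂ) + (q.2:ℂ)*Complex.I) ^ j * ((τ:ℂ) * ((q.1:ℂ) - (q.2:ℂ)*Complex.I)) ^ (p1 - j) *
          (p1.choose j : ℂ) *
        (((q.1:ℂ) - (q.2:ℂ)*Complex.I) ^ k * ((τ:ℂ) * ((q.1:ℂ) + (q.2:ℂ)*Complex.I)) ^ (p2 - k) *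
          (p2.choose k : ℂ))
        = ((p1.choose j : ℂ) * (p2.choose k : ℂ) * (τ:ℂ) ^ ((p1 - j) + (p2 - k))) *
          (((q.1:ℂ) + (q.2:ℂ)*Complex.I) ^ (j + (p2 - k)) *
           ((q.1:ℂ) - (q.2:ℂ)*Complex.I) ^ ((p1 - j) + k)) := by
      intro q
      rw [pow_add, pow_add, mul_pow, mul_pow, pow_add]
      ring
    simp_rw [hre]
    rw [integral_const_mul, disk_moment (j + (p2-k)) ((p1-j) + k)]
    by_cases hc : j + (p2 - k) = (p1 - j) + k
    · rw [if_pos hc, if_pos hc]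
      push_cast
      ring
    · rw [if_neg hc, if_neg hc, mul_zero, Complex.ofReal_mul, Complex.ofReal_zero, mul_zero]
  have hsum : (∑ j ∈ range (p1+1), ∫ q : ℝ × ℝ in D, ∑ k ∈ range (p2+1),
      ((q.1:ℂ) + (q.2:ℂ)*Complex.I) ^ j * ((τ:ℂ) * ((q.1:ℂ) - (q.2:ℂ)*Complex.I)) ^ (p1 - j) *
        (p1.choose j : ℂ) *
      (((q.1:ℂ) - (q.2:ℂ)*Complex.I) ^ k * ((τ:ℂ) * ((q.1:ℂ) + (q.2:ℂ)*Complex.I)) ^ (p2 - k) *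
        (p2.choose k : ℂ)))
      = ((Real.pi * C1 τ p1 p2 : ℝ) : ℂ) := by
    calc (∑ j ∈ range (p1+1), ∫ q : ℝ × ℝ in D, ∑ k ∈ range (p2+1),
        ((q.1:ℂ) + (q.2:ℂ)*Complex.I) ^ j * ((τ:ℂ) * ((q.1:ℂ) - (q.2:ℂ)*Complex.I)) ^ (p1 - j) *
          (p1.choose j : ℂ) *
        (((q.1:ℂ) - (q.2:ℂ)*Complex.I) ^ k * ((τ:ℂ) * ((q.1:ℂ) + (q.2:ℂ)*Complex.I)) ^ (p2 - k) *
          (p2.choose k : ℂ)))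
        = ∑ j ∈ range (p1+1), ∑ k ∈ range (p2+1),
            ((Real.pi * (if j + (p2 - k) = (p1 - j) + k then
              (p1.choose j : ℝ) * p2.choose k * τ ^ ((p1 - j) + (p2 - k)) *
                (((j + (p2 - k) : ℕ) : ℝ) + 1)⁻¹ else 0) : ℝ) : ℂ) := by
          refine Finset.sum_congr rfl fun j hj => ?_
          rw [integral_finset_sum _ (fun k _ => hint j k)]
          exact Finset.sum_congr rfl fun k hk => hterm j hj k hk
      _ = ((Real.pi * ∑ j ∈ range (p1+1), ∑ k ∈ range (p2+1),
            (if j + (p2 - k) = (p1 - j) + k then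
              (p1.choose j : ℝ) * p2.choose k * τ ^ ((p1 - j) + (p2 - k)) *
                (((j + (p2 - k) : ℕ) : ℝ) + 1)⁻¹ else 0) : ℝ) : ℂ) := by
          rw [Finset.mul_sum]
          rw [Complex.ofReal_sum]
          refine Finset.sum_congr rfl fun j hj => ?_
          rw [Finset.mul_sum, Complex.ofReal_sum]
      _ = _ := by rw [sum_pairs_eq τ p1 p2 hpar]
  rw [hsum, Complex.real_smul]
  have hpi : (Real.pi : ℂ) ≠ 0 := Complex.ofReal_ne_zero.mpr Real.pi_ne_zero
  have ht : ((1:ℂ) - (τ:ℂ)^2) ≠ 0 := by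
    intro h
    have h2 : (1:ℝ) - τ^2 = 0 := by exact_mod_cast congrArg Complex.re h
    nlinarith
  push_cast
  field_simp
  ring
end

section
/- Let p1, p2 ≥ 0 be integers with p := p1 + p2 ≥ 1. Then for every real number α (with the convention 0^0 := 1): Σ_{r=−min(p1,p2)}^{min(p1,p2)} Σ_{l1=0}^{p1} Σ_{l2=0}^{p2} (α^{p−l1−l2}/(l1+l2+1)) · binom(p1,l1)·binom(p1+l1, l1+r)·binom(p2,l2)·binom(p2+l2, l2−r) = Σ_{k=1}^{p} (1/p)·binom(p,k)·binom(p,k−1)·(1+α)^k, i.e. the Hermitian limit τ = 1 of L1(p1,p2) equals the Narayana polynomial N_p(1+α). -/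
open Finset

lemma zbinom_neg {n : ℕ} {m : ℤ} (h : m < 0) : zbinom n m = 0 := by
  rw [zbinom, if_neg]; omega

lemma zbinom_gt {n : ℕ} {m : ℤ} (h : (n : ℤ) < m) : zbinom n m = 0 := by
  rw [zbinom, if_neg]; omega

lemma zbinom_natCast_s16 (n j : ℕ) : zbinom n (j : ℤ) = (n.choose j : ℝ) := by
  rw [zbinom]
  by_cases h : j ≤ n
  · rw [if_pos (by exact ⟨Int.natCast_nonneg j, by exact_mod_cast h⟩), Int.toNat_natCast]
  · rw [if_neg (by push_cast; omega), Nat.choose_eq_zero_of_lt (by omega), Nat.cast_zero]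

lemma int_sum (n : ℕ) (f : ℤ → ℝ) :
    ∑ j ∈ Icc (0 : ℤ) (n : ℤ), f j = ∑ j ∈ range (n + 1), f (j : ℤ) := by
  refine Finset.sum_bij' (fun j _ => j.toNat) (fun j _ => (j : ℤ)) ?_ ?_ ?_ ?_ ?_ <;>
      intro a ha <;> (try dsimp only) <;>
      simp only [Finset.mem_Icc, Finset.mem_range] at ha <;>
      first
        | (simp only [Finset.mem_Icc, Finset.mem_range]; omega)
        | omega
        | (congr 1; omega)

lemma VdmN (m n k : ℕ) :
    ∑ j ∈ range (k+1), m.choose j * n.choose (k - j) = (m+n).choose k := by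
  rw [Nat.add_choose_eq, Finset.Nat.sum_antidiagonal_eq_sum_range_succ_mk]

lemma Vdm (m n k : ℕ) :
    ∑ j ∈ range (k+1), (m.choose j : ℝ) * (n.choose (k - j) : ℝ) = ((m+n).choose k : ℝ) := by
  rw [Nat.add_choose_eq, Finset.Nat.sum_antidiagonal_eq_sum_range_succ_mk]
  push_cast
  rfl

lemma choose_mul_choose (n k m : ℕ) (hm : m ≤ k) :
    n.choose k * k.choose m = n.choose m * (n - m).choose (k - m) := by
  by_cases hk : k ≤ n
  · have h1 : n.choose k * k.choose m * (m.factorial * (k-m).factorial * (n-k).factorial) = n.factorial := by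
      have e1 := Nat.choose_mul_factorial_mul_factorial hm
      have e2 := Nat.choose_mul_factorial_mul_factorial hk
      calc n.choose k * k.choose m * (m.factorial * (k-m).factorial * (n-k).factorial)
          = n.choose k * (k.choose m * m.factorial * (k-m).factorial) * (n-k).factorial := by ring
        _ = n.choose k * k.factorial * (n-k).factorial := by rw [e1]
        _ = n.factorial := e2
    have h2 : n.choose m * (n-m).choose (k-m) * (m.factorial * (k-m).factorial * (n-k).factorial) = n.factorial := by
      have hmn : m ≤ n := hm.trans hk
      have hkm : k - m ≤ n - m := by omega
      have e3 := Nat.choose_mul_factorial_mul_factorial hkm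
      have e4 := Nat.choose_mul_factorial_mul_factorial hmn
      have hnk : n - m - (k - m) = n - k := by omega
      calc n.choose m * (n-m).choose (k-m) * (m.factorial * (k-m).factorial * (n-k).factorial)
          = n.choose m * ((n-m).choose (k-m) * (k-m).factorial * (n-m-(k-m)).factorial) * m.factorial := by
            rw [hnk]; ring
        _ = n.choose m * (n-m).factorial * m.factorial := by rw [e3]
        _ = n.choose m * m.factorial * (n-m).factorial := by ring
        _ = n.factorial := e4
    have hpos : 0 < m.factorial * (k-m).factorial * (n-k).factorial := by positivity
    exact Nat.eq_of_mul_eq_mul_right hpos (h1.trans h2.symm)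
  · rw [Nat.choose_eq_zero_of_lt (by omega), Nat.zero_mul]
    rcases le_or_gt m n with h | h
    · rw [Nat.choose_eq_zero_of_lt (show n - m < k - m by omega), Nat.mul_zero]
    · rw [Nat.choose_eq_zero_of_lt h, Nat.zero_mul]

lemma pascal_sum (n : ℕ) (h : ℕ → ℝ) :
    ∑ l ∈ range (n+2), ((n+1).choose l : ℝ) * h l
      = ∑ l ∈ range (n+1), (n.choose l : ℝ) * (h l + h (l+1)) := by
  rw [Finset.sum_range_succ' (fun l => ((n+1).choose l : ℝ) * h l) (n+1)]
  have e1 : ∀ l ∈ range (n+1), ((n+1).choose (l+1) : ℝ) * h (l+1)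
      = (n.choose l : ℝ) * h (l+1) + (n.choose (l+1) : ℝ) * h (l+1) := by
    intro l _
    rw [Nat.choose_succ_succ]
    push_cast
    ring
  rw [Finset.sum_congr rfl e1, Finset.sum_add_distrib]
  have e2 : ∑ l ∈ range (n+1), (n.choose (l+1) : ℝ) * h (l+1)
      = ∑ l ∈ range (n+1), (n.choose l : ℝ) * h l - (n.choose 0 : ℝ) * h 0 := by
    rw [Finset.sum_range_succ (fun l => (n.choose (l+1) : ℝ) * h (l+1)) n,
        Finset.sum_range_succ' (fun l => (n.choose l : ℝ) * h l) n]
    simp [Nat.choose_succ_self]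
  rw [e2]
  simp only [Nat.choose_zero_right, Nat.cast_one, one_mul, mul_add]
  rw [Finset.sum_add_distrib]
  ring

lemma conv (p1 p2 : ℕ) (h : ℕ → ℝ) :
    ∑ l1 ∈ range (p1+1), ∑ l2 ∈ range (p2+1),
      (p1.choose l1 : ℝ) * (p2.choose l2 : ℝ) * h (l1+l2)
      = ∑ l ∈ range (p1+p2+1), ((p1+p2).choose l : ℝ) * h l := by
  induction p1 generalizing h with
  | zero => simp
  | succ n ih =>
    have lhs : ∑ l1 ∈ range (n+2), ∑ l2 ∈ range (p2+1),
        ((n+1).choose l1 : ℝ) * (p2.choose l2 : ℝ) * h (l1+l2)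
        = ∑ l1 ∈ range (n+2), ((n+1).choose l1 : ℝ) *
            (∑ l2 ∈ range (p2+1), (p2.choose l2 : ℝ) * h (l1+l2)) := by
      refine Finset.sum_congr rfl fun l1 _ => ?_
      rw [Finset.mul_sum]
      refine Finset.sum_congr rfl fun l2 _ => by ring
    rw [lhs, pascal_sum]
    have mid : ∑ l1 ∈ range (n+1), (n.choose l1 : ℝ) *
        ((∑ l2 ∈ range (p2+1), (p2.choose l2 : ℝ) * h (l1+l2))
          + ∑ l2 ∈ range (p2+1), (p2.choose l2 : ℝ) * h (l1+1+l2))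
        = ∑ l1 ∈ range (n+1), ∑ l2 ∈ range (p2+1),
            (n.choose l1 : ℝ) * (p2.choose l2 : ℝ) * (h (l1+l2) + h (l1+l2+1)) := by
      refine Finset.sum_congr rfl fun l1 _ => ?_
      rw [mul_add, Finset.mul_sum, Finset.mul_sum, ← Finset.sum_add_distrib]
      refine Finset.sum_congr rfl fun l2 _ => ?_
      have : l1 + 1 + l2 = l1 + l2 + 1 := by ring
      rw [this]; ring
    rw [mid, ih (fun l => h l + h (l+1))]
    rw [show n + 1 + p2 = n + p2 + 1 by ring]
    exact (pascal_sum (n+p2) h).symm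

lemma zsum (p1 p2 l1 l2 : ℕ) (h1 : l1 ≤ p1) (h2 : l2 ≤ p2) :
    ∑ r ∈ Icc (-(min p1 p2 : ℤ)) (min p1 p2 : ℤ),
      zbinom (p1 + l1) ((l1 : ℤ) + r) * zbinom (p2 + l2) ((l2 : ℤ) - r)
      = ((p1 + p2 + l1 + l2).choose (l1 + l2) : ℝ) := by
  set P : ℕ := p1 + p2 with hP
  have hsub : Icc (-(min p1 p2 : ℤ)) (min p1 p2 : ℤ) ⊆ Icc (-(P : ℤ)) (P : ℤ) := by
    apply Finset.Icc_subset_Icc <;> push_cast <;> omega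
  rw [Finset.sum_subset hsub (by
    intro r _ hr
    simp only [Finset.mem_Icc, not_and_or, not_le] at hr
    have hc : (l1 : ℤ) + r < 0 ∨ ((p1 + l1 : ℕ) : ℤ) < (l1 : ℤ) + r ∨
        (l2 : ℤ) - r < 0 ∨ ((p2 + l2 : ℕ) : ℤ) < (l2 : ℤ) - r := by
      push_cast at hr ⊢; omega
    rcases hc with h | h | h | h
    · rw [zbinom_neg h, zero_mul]
    · rw [zbinom_gt h, zero_mul]
    · rw [zbinom_neg h, mul_zero]
    · rw [zbinom_gt h, mul_zero])]
  have hmap : Icc (-(P : ℤ) + l1) ((P : ℤ) + l1) = (Icc (-(P:ℤ)) (P:ℤ)).map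
      (addRightEmbedding (l1 : ℤ)) := by
    rw [Finset.map_add_right_Icc]
  have e1 : ∑ r ∈ Icc (-(P:ℤ)) (P:ℤ),
      zbinom (p1 + l1) ((l1 : ℤ) + r) * zbinom (p2 + l2) ((l2 : ℤ) - r)
      = ∑ j ∈ Icc (-(P : ℤ) + l1) ((P : ℤ) + l1),
          zbinom (p1 + l1) j * zbinom (p2 + l2) ((l1 : ℤ) + l2 - j) := by
    rw [hmap, Finset.sum_map]
    refine Finset.sum_congr rfl fun r _ => ?_
    simp only [addRightEmbedding_apply]
    congr 1 <;> congr 1 <;> ring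
  rw [e1]
  have hsub2 : Icc (0 : ℤ) ((l1 : ℤ) + l2) ⊆ Icc (-(P : ℤ) + l1) ((P : ℤ) + l1) := by
    apply Finset.Icc_subset_Icc <;> push_cast <;> omega
  rw [← Finset.sum_subset hsub2 (by
    intro j _ hj
    simp only [Finset.mem_Icc, not_and_or, not_le] at hj
    rcases hj with h | h
    · rw [zbinom_neg h, zero_mul]
    · rw [zbinom_neg (show (l1 : ℤ) + l2 - j < 0 by omega), mul_zero])]
  have e2 : ((l1 : ℤ) + l2) = ((l1 + l2 : ℕ) : ℤ) := by push_cast; ring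
  rw [e2, int_sum]
  have e3 : ∀ j ∈ range (l1 + l2 + 1),
      zbinom (p1 + l1) (j : ℤ) * zbinom (p2 + l2) (((l1 + l2 : ℕ) : ℤ) - (j : ℤ))
      = ((p1 + l1).choose j : ℝ) * (((p2 + l2).choose (l1 + l2 - j) : ℝ)) := by
    intro j hj
    simp only [Finset.mem_range] at hj
    rw [zbinom_natCast_s16, show ((l1 + l2 : ℕ) : ℤ) - (j : ℤ) = ((l1 + l2 - j : ℕ) : ℤ) by
      push_cast [Nat.cast_sub (by omega : j ≤ l1 + l2)]; ring, zbinom_natCast_s16]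
  rw [Finset.sum_congr rfl e3, Vdm]
  have : p1 + l1 + (p2 + l2) = P + l1 + l2 := by omega
  rw [this]

lemma N1 (p l : ℕ) (hl : l ≤ p) (hp : 1 ≤ p) :
    ∑ j ∈ range p, p.choose (j+1) * p.choose j * (j+1).choose (p - l)
      = p.choose l * (p + l).choose (p - 1) := by
  by_cases hm : p - l = 0
  · have hlp : l = p := by omega
    subst hlp
    simp only [hm, Nat.choose_zero_right, mul_one, Nat.choose_self, one_mul]
    have key := VdmN l l (l+1)
    rw [Finset.sum_range_succ' _ (l+1), Finset.sum_range_succ] at key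
    simp only [Nat.choose_succ_self, Nat.choose_zero_right, Nat.zero_mul, Nat.mul_zero,
      Nat.mul_one, zero_mul, mul_zero, add_zero, zero_add, one_mul, Nat.sub_zero] at key
    have e : ∀ j ∈ range l, l.choose (j+1) * l.choose (l + 1 - (j+1))
        = l.choose (j+1) * l.choose j := by
      intro j hj
      simp only [Finset.mem_range] at hj
      congr 1
      rw [show l + 1 - (j+1) = l - j by omega, Nat.choose_symm (by omega : j ≤ l)]
    rw [← Finset.sum_congr rfl e, key,
      ← Nat.choose_symm (show l - 1 ≤ l + l by omega),
      show l + l - (l - 1) = l + 1 by omega]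
  · set m := p - l with hmdef
    have hm1 : 1 ≤ m := by omega
    have hml : m + l = p := by omega
    have split : ∑ j ∈ range p, p.choose (j+1) * p.choose j * (j+1).choose m
        = ∑ j ∈ Ico (m-1) p, p.choose (j+1) * p.choose j * (j+1).choose m := by
      rw [Finset.range_eq_Ico, ← Finset.sum_Ico_consecutive _ (by omega : 0 ≤ m-1) (by omega : m-1 ≤ p)]
      have z : ∑ j ∈ Ico 0 (m-1), p.choose (j+1) * p.choose j * (j+1).choose m = 0 := by
        apply Finset.sum_eq_zero
        intro j hj
        simp only [Finset.mem_Ico] at hj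
        rw [Nat.choose_eq_zero_of_lt (show j + 1 < m by omega), mul_zero]
      rw [z, zero_add]
    rw [split, Finset.sum_Ico_eq_sum_range]
    have hrange : p - (m-1) = l + 1 := by omega
    rw [hrange]
    have e : ∀ i ∈ range (l+1), p.choose (m-1+i+1) * p.choose (m-1+i) * (m-1+i+1).choose m
        = p.choose m * (l.choose i * p.choose (l+1-i)) := by
      intro i hi
      simp only [Finset.mem_range] at hi
      have h1 : m - 1 + i + 1 = m + i := by omega
      rw [h1]
      have h2 : p.choose (m+i) * (m+i).choose m = p.choose m * l.choose i := by
        rw [choose_mul_choose p (m+i) m (by omega)]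
        congr 2 <;> omega
      have h3 : p.choose (m-1+i) = p.choose (l+1-i) := by
        rw [← Nat.choose_symm (show m-1+i ≤ p by omega)]
        congr 1
        omega
      calc p.choose (m+i) * p.choose (m-1+i) * (m+i).choose m
          = p.choose (m+i) * (m+i).choose m * p.choose (m-1+i) := by ring
        _ = p.choose m * l.choose i * p.choose (l+1-i) := by rw [h2, h3]
        _ = p.choose m * (l.choose i * p.choose (l+1-i)) := by ring
    rw [Finset.sum_congr rfl e, ← Finset.mul_sum]
    have key := VdmN l p (l+1)
    rw [Finset.sum_range_succ] at key
    simp only [Nat.choose_succ_self, zero_mul, add_zero] at key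
    rw [key, show l + p = p + l by ring, hmdef, Nat.choose_symm hl,
      ← Nat.choose_symm (show p - 1 ≤ p + l by omega),
      show p + l - (p - 1) = l + 1 by omega]

lemma step3 (p : ℕ) (hp : 1 ≤ p) (α : ℝ) :
    ∑ l ∈ range (p+1), (p.choose l : ℝ) * ((p+l).choose l : ℝ) * α ^ (p - l) / ((l : ℝ) + 1)
      = ∑ k ∈ Icc 1 p, (1 / (p : ℝ)) * (p.choose k : ℝ) * (p.choose (k-1) : ℝ) * (1 + α) ^ k := by
  have hIcc : ∑ k ∈ Icc 1 p, (1 / (p : ℝ)) * (p.choose k : ℝ) * (p.choose (k-1) : ℝ) * (1 + α) ^ k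
      = ∑ j ∈ range p, (1 / (p : ℝ)) * (p.choose (j+1) : ℝ) * (p.choose j : ℝ) * (1 + α) ^ (j+1) := by
    rw [← Finset.Ico_add_one_right_eq_Icc, Finset.sum_Ico_eq_sum_range]
    refine Finset.sum_congr rfl fun j _ => ?_
    rw [show 1 + j = j + 1 by ring]
    simp
  rw [hIcc]
  have hpow : ∀ j ∈ range p, (1 / (p : ℝ)) * (p.choose (j+1) : ℝ) * (p.choose j : ℝ) * (1 + α) ^ (j+1)
      = ∑ t ∈ range (p+1),
          (1 / (p : ℝ)) * (p.choose (j+1) : ℝ) * (p.choose j : ℝ) * ((j+1).choose t : ℝ) * α ^ t := by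
    intro j hj
    simp only [Finset.mem_range] at hj
    have expand : (1 + α) ^ (j+1) = ∑ t ∈ range (p+1), ((j+1).choose t : ℝ) * α ^ t := by
      rw [add_comm (1 : ℝ) α, add_pow]
      rw [← Finset.sum_subset (Finset.range_subset_range.2 (by omega : j + 1 + 1 ≤ p + 1))
        (fun t _ ht => by
          simp only [Finset.mem_range, not_lt] at ht
          simp [Nat.choose_eq_zero_of_lt (show j + 1 < t by omega)])]
      exact Finset.sum_congr rfl fun t _ => by simp [mul_comm]
    rw [expand, Finset.mul_sum]
    exact Finset.sum_congr rfl fun t _ => by ring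
  rw [Finset.sum_congr rfl hpow, Finset.sum_comm]
  rw [← Finset.sum_range_reflect]
  refine Finset.sum_congr rfl fun t ht => ?_
  simp only [Finset.mem_range] at ht
  set l : ℕ := p - t with hldef
  have hlt : p - l = t := by omega
  have h1 : p + 1 - 1 - t = l := by omega
  rw [h1, ← hlt]
  have hN := N1 p l (by omega) hp
  have hsum : ∑ j ∈ range p,
      (1 / (p : ℝ)) * (p.choose (j+1) : ℝ) * (p.choose j : ℝ) * ((j+1).choose (p - l) : ℝ) * α ^ (p - l)
      = (1 / (p : ℝ)) * ((p.choose l * (p + l).choose (p-1) : ℕ) : ℝ) * α ^ (p - l) := by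
    rw [← hN]
    push_cast
    rw [Finset.mul_sum, Finset.sum_mul]
    exact Finset.sum_congr rfl fun j _ => by ring
  rw [hsum]
  have keyN : (l + 1) * ((p + l).choose (p-1)) = p * ((p+l).choose l) := by
    have h2 : (p+l).choose (l+1) = (p+l).choose (p-1) := by
      rw [← Nat.choose_symm (show l + 1 ≤ p + l by omega), show p + l - (l+1) = p - 1 by omega]
    have h3 := Nat.choose_succ_right_eq (p+l) l
    rw [h2, show p + l - l = p by omega] at h3
    rw [mul_comm, h3, mul_comm]
  have key : ((l : ℝ) + 1) * ((p + l).choose (p-1) : ℝ) = (p : ℝ) * ((p+l).choose l : ℝ) := by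
    exact_mod_cast keyN
  have hp0 : (p : ℝ) ≠ 0 := by positivity
  have hl0 : (l : ℝ) + 1 ≠ 0 := by positivity
  push_cast
  field_simp
  linear_combination (-(p.choose l : ℝ) * α ^ (p - l)) * key

/-- The Hermitian limit `τ = 1` of `L1(p1,p2)` equals the Narayana polynomial
`N_p(1+α)` with `p = p1 + p2 ≥ 1`:
`∑_{r=−min(p1,p2)}^{min(p1,p2)} ∑_{l1=0}^{p1} ∑_{l2=0}^{p2} (α^{p−l1−l2}/(l1+l2+1))
  binom(p1,l1) binom(p1+l1,l1+r) binom(p2,l2) binom(p2+l2,l2−r)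
 = ∑_{k=1}^{p} (1/p) binom(p,k) binom(p,k−1) (1+α)^k`. -/
theorem L1_hermitian_limit_narayana (p1 p2 : ℕ) (hp : 1 ≤ p1 + p2) (α : ℝ) :
    ∑ r ∈ Finset.Icc (-(min p1 p2 : ℤ)) (min p1 p2 : ℤ),
        ∑ l1 ∈ Finset.range (p1 + 1), ∑ l2 ∈ Finset.range (p2 + 1),
          (α ^ (p1 + p2 - l1 - l2) / ((l1 + l2 + 1 : ℕ) : ℝ)) *
            (p1.choose l1 : ℝ) * zbinom (p1 + l1) ((l1 : ℤ) + r) *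
            (p2.choose l2 : ℝ) * zbinom (p2 + l2) ((l2 : ℤ) - r)
      = ∑ k ∈ Finset.Icc 1 (p1 + p2),
          (1 / ((p1 + p2 : ℕ) : ℝ)) * ((p1 + p2).choose k : ℝ) *
            ((p1 + p2).choose (k - 1) : ℝ) * (1 + α) ^ k := by
  rw [Finset.sum_comm]
  have swap2 : ∀ l1 ∈ range (p1 + 1),
      ∑ r ∈ Finset.Icc (-(min p1 p2 : ℤ)) (min p1 p2 : ℤ), ∑ l2 ∈ Finset.range (p2 + 1),
          (α ^ (p1 + p2 - l1 - l2) / ((l1 + l2 + 1 : ℕ) : ℝ)) *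
            (p1.choose l1 : ℝ) * zbinom (p1 + l1) ((l1 : ℤ) + r) *
            (p2.choose l2 : ℝ) * zbinom (p2 + l2) ((l2 : ℤ) - r)
      = ∑ l2 ∈ Finset.range (p2 + 1),
          (α ^ (p1 + p2 - l1 - l2) / ((l1 + l2 + 1 : ℕ) : ℝ)) *
            (p1.choose l1 : ℝ) * (p2.choose l2 : ℝ) *
            ((p1 + p2 + l1 + l2).choose (l1 + l2) : ℝ) := by
    intro l1 hl1
    simp only [Finset.mem_range] at hl1
    rw [Finset.sum_comm]
    refine Finset.sum_congr rfl fun l2 hl2 => ?_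
    simp only [Finset.mem_range] at hl2
    have pull : ∑ r ∈ Finset.Icc (-(min p1 p2 : ℤ)) (min p1 p2 : ℤ),
        (α ^ (p1 + p2 - l1 - l2) / ((l1 + l2 + 1 : ℕ) : ℝ)) *
          (p1.choose l1 : ℝ) * zbinom (p1 + l1) ((l1 : ℤ) + r) *
          (p2.choose l2 : ℝ) * zbinom (p2 + l2) ((l2 : ℤ) - r)
        = (α ^ (p1 + p2 - l1 - l2) / ((l1 + l2 + 1 : ℕ) : ℝ)) *
            (p1.choose l1 : ℝ) * (p2.choose l2 : ℝ) *
            ∑ r ∈ Finset.Icc (-(min p1 p2 : ℤ)) (min p1 p2 : ℤ),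
              zbinom (p1 + l1) ((l1 : ℤ) + r) * zbinom (p2 + l2) ((l2 : ℤ) - r) := by
      rw [Finset.mul_sum]
      exact Finset.sum_congr rfl fun r _ => by ring
    rw [pull, zsum p1 p2 l1 l2 (by omega) (by omega)]
  rw [Finset.sum_congr rfl swap2]
  have e : ∀ l1 ∈ range (p1 + 1), ∀ l2 ∈ range (p2 + 1),
      (α ^ (p1 + p2 - l1 - l2) / ((l1 + l2 + 1 : ℕ) : ℝ)) *
        (p1.choose l1 : ℝ) * (p2.choose l2 : ℝ) *
        ((p1 + p2 + l1 + l2).choose (l1 + l2) : ℝ)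
      = (p1.choose l1 : ℝ) * (p2.choose l2 : ℝ) *
          ((fun l => α ^ (p1 + p2 - l) / ((l : ℝ) + 1) *
            (((p1 + p2) + l).choose l : ℝ)) (l1 + l2)) := by
    intro l1 _ l2 _
    simp only
    rw [show p1 + p2 - l1 - l2 = p1 + p2 - (l1 + l2) by omega,
      show p1 + p2 + l1 + l2 = p1 + p2 + (l1 + l2) by omega]
    push_cast
    ring
  rw [Finset.sum_congr rfl (fun l1 hl1 => Finset.sum_congr rfl (fun l2 hl2 => e l1 hl1 l2 hl2)),
    conv p1 p2 (fun l => α ^ (p1 + p2 - l) / ((l : ℝ) + 1) * (((p1 + p2) + l).choose l : ℝ)),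
    ← step3 (p1 + p2) hp α]
  exact Finset.sum_congr rfl fun l _ => by ring
end

section
/- Let p1, p2 ≥ 1 be integers with p1 ≡ p2 (mod 2) and set p := (p1+p2)/2. Then: (a) Σ_{r ∈ I_{min(p1,p2)}} (r/2)·binom(p1, (p1+r)/2)·binom(p2, (p2+r)/2) = 0 (i.e. C2(p1,p2) vanishes at τ = 1); and (b) Σ_{r ∈ I_{max(p1,p2)}} Σ_{s=1}^{max(p1,p2)} [ (p1/(p1+p2))·binom(p1, (p1+r)/2 − s)·binom(p2, (p2+r)/2) + (p2/(p1+p2))·binom(p1, (p1+r)/2)·binom(p2, (p2+r)/2 − s) ] = Σ_{l=0}^{p−1} binom(2p, l), so that the Hermitian limit τ = 1 of the subleading coefficient C2'(p1,p2) of the symplectic elliptic Ginibre spectral moments equals −(1/2)·Σ_{l=0}^{p−1} binom(2p, l). -/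
open Finset

lemma zbinom_reflect (n : ℕ) (r : ℤ) (h : ((n:ℤ) + r) % 2 = 0) :
    zbinom n (((n:ℤ) - r)/2) = zbinom n (((n:ℤ) + r)/2) := by
  unfold zbinom
  set k := ((n:ℤ) + r)/2 with hk
  have hnk : ((n:ℤ) - r)/2 = (n:ℤ) - k := by omega
  rw [hnk]
  by_cases hc : 0 ≤ k ∧ k ≤ (n:ℤ)
  · rw [if_pos (by omega), if_pos hc]
    have h1 : ((n:ℤ) - k).toNat = n - k.toNat := by omega
    rw [h1, Nat.choose_symm (by omega)]
  · rw [if_neg (by omega), if_neg hc]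

lemma mem_Ip {M : ℕ} {r : ℤ} : r ∈ Ip M ↔ -(M:ℤ) ≤ r ∧ r ≤ M ∧ r % 2 = (M:ℤ) % 2 := by
  simp [Ip, Finset.mem_filter, Finset.mem_Icc, and_assoc]

lemma zbinom_eq_sum (n : ℕ) (t : ℤ) :
    zbinom n t = ∑ m ∈ Finset.range (n+1), if (m:ℤ) = t then (n.choose m : ℝ) else 0 := by
  unfold zbinom
  by_cases h : 0 ≤ t ∧ t ≤ (n:ℤ)
  · rw [if_pos h, Finset.sum_eq_single t.toNat]
    · rw [if_pos (by omega)]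
    · intro b _ hbt
      rw [if_neg (by omega)]
    · intro hmem
      exact absurd (Finset.mem_range.2 (by omega)) hmem
  · rw [if_neg h]
    refine (Finset.sum_eq_zero fun m hm => ?_).symm
    rw [if_neg (by simp only [Finset.mem_range] at hm; omega)]

lemma sum_zbinom_shift (n M : ℕ) (k : ℤ) (hk : k ≤ (M:ℤ)) :
    ∑ s ∈ Finset.Icc 1 M, zbinom n (k - (s:ℤ))
      = ∑ j ∈ Finset.range (n+1), if (j:ℤ) < k then (n.choose j : ℝ) else 0 := by
  simp_rw [zbinom_eq_sum]
  rw [Finset.sum_comm]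
  refine Finset.sum_congr rfl fun j hj => ?_
  simp only [Finset.mem_range] at hj
  by_cases h : (j:ℤ) < k
  · rw [if_pos h, Finset.sum_eq_single (k - j).toNat]
    · rw [if_pos (by omega)]
    · intro b hb hbne
      simp only [Finset.mem_Icc] at hb
      rw [if_neg (by omega)]
    · intro hmem
      exact absurd (Finset.mem_Icc.2 (by omega)) hmem
  · rw [if_neg h]
    refine Finset.sum_eq_zero fun s hs => ?_
    simp only [Finset.mem_Icc] at hs
    rw [if_neg (by omega)]

lemma sum_Ip_collapse (n M : ℕ) (hn : n ≤ M) (hpar : n % 2 = M % 2) (g : ℤ → ℝ) :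
    ∑ r ∈ Ip M, zbinom n (((n:ℤ) + r)/2) * g r
      = ∑ m ∈ Finset.range (n+1), (n.choose m : ℝ) * g (2*(m:ℤ) - n) := by
  have step : ∀ r ∈ Ip M, zbinom n (((n:ℤ)+r)/2) * g r
      = ∑ m ∈ Finset.range (n+1), if r = 2*(m:ℤ) - n then (n.choose m : ℝ) * g r else 0 := by
    intro r hr
    rw [mem_Ip] at hr
    rw [zbinom_eq_sum, Finset.sum_mul]
    refine Finset.sum_congr rfl fun m hm => ?_
    simp only [Finset.mem_range] at hm
    by_cases h : r = 2*(m:ℤ) - n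
    · rw [if_pos h, if_pos (by omega)]
    · rw [if_neg h, if_neg (by omega), zero_mul]
  rw [Finset.sum_congr rfl step, Finset.sum_comm]
  refine Finset.sum_congr rfl fun m hm => ?_
  simp only [Finset.mem_range] at hm
  rw [Finset.sum_eq_single (2*(m:ℤ) - n)]
  · rw [if_pos rfl]
  · intro r _ hne
    rw [if_neg hne]
  · intro hmem
    exact absurd (mem_Ip.2 (by omega)) hmem

lemma term_eval (a b M : ℕ) (haM : a ≤ M) (hbM : b ≤ M)
    (hparA : a % 2 = M % 2) (hparB : b % 2 = M % 2) :
    ∑ r ∈ Ip M, ∑ s ∈ Finset.Icc 1 M,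
        zbinom a (((a:ℤ)+r)/2 - (s:ℤ)) * zbinom b (((b:ℤ)+r)/2)
      = ∑ j ∈ Finset.range (a+1), ∑ m ∈ Finset.range (b+1),
          if 2*j + 2*m < a + b then (a.choose j : ℝ) * (b.choose m) else 0 := by
  have step1 : ∀ r ∈ Ip M, ∑ s ∈ Finset.Icc 1 M,
      zbinom a (((a:ℤ)+r)/2 - (s:ℤ)) * zbinom b (((b:ℤ)+r)/2)
      = zbinom b (((b:ℤ)+r)/2) *
        ∑ j ∈ Finset.range (a+1), (if (j:ℤ) < ((a:ℤ)+r)/2 then (a.choose j:ℝ) else 0) := by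
    intro r hr
    rw [mem_Ip] at hr
    rw [← Finset.sum_mul, mul_comm, sum_zbinom_shift a M _ (by omega)]
  rw [Finset.sum_congr rfl step1, sum_Ip_collapse b M hbM hparB]
  rw [Finset.sum_comm]
  conv_lhs => rw [← Finset.sum_range_reflect]
  refine Finset.sum_congr rfl fun m hm => ?_
  simp only [Finset.mem_range, Nat.add_sub_cancel] at hm ⊢
  have hm' : m ≤ b := by omega
  rw [Nat.choose_symm hm', Finset.mul_sum]
  refine Finset.sum_congr rfl fun j hj => ?_
  have hiff : ((j:ℤ) < ((a:ℤ) + (2 * ((b - m : ℕ):ℤ) - (b:ℤ))) / 2) ↔ (2 * j + 2 * m < a + b) := by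
    constructor <;> intro h <;> omega
  simp only [hiff]
  split_ifs <;> ring

lemma choose_eq_double_sum (a b l : ℕ) :
    ((a+b).choose l : ℝ) = ∑ j ∈ Finset.range (a+1), ∑ m ∈ Finset.range (b+1),
      if j + m = l then (a.choose j : ℝ) * (b.choose m) else 0 := by
  have hv : ((a+b).choose l : ℝ) = ∑ k ∈ Finset.range (l+1), (a.choose k : ℝ) * (b.choose (l-k)) := by
    rw [Nat.add_choose_eq, Finset.Nat.sum_antidiagonal_eq_sum_range_succ_mk]
    push_cast
    rfl
  have collapse : ∀ j, (∑ m ∈ Finset.range (b+1),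
      if j + m = l then (a.choose j : ℝ) * (b.choose m) else 0)
      = if j ≤ l then (a.choose j : ℝ) * (b.choose (l-j)) else 0 := by
    intro j
    by_cases hj : j ≤ l
    · rw [if_pos hj]
      by_cases hb : l - j ≤ b
      · rw [Finset.sum_eq_single (l-j)]
        · rw [if_pos (by omega)]
        · intro m _ hmne
          rw [if_neg (by omega)]
        · intro hmem
          exact absurd (Finset.mem_range.2 (by omega)) hmem
      · rw [Nat.choose_eq_zero_of_lt (show b < l - j by omega), Nat.cast_zero, mul_zero]
        refine Finset.sum_eq_zero fun m hm => ?_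
        simp only [Finset.mem_range] at hm
        rw [if_neg (by omega)]
    · rw [if_neg hj]
      refine Finset.sum_eq_zero fun m _ => ?_
      rw [if_neg (by omega)]
  simp_rw [collapse]
  set h : ℕ → ℝ := fun j => if j ≤ l then (a.choose j : ℝ) * (b.choose (l-j)) else 0 with hh
  have e1 : ∑ j ∈ Finset.range (a+1), h j = ∑ j ∈ Finset.range (a+l+2), h j := by
    refine Finset.sum_subset (Finset.range_subset_range.2 (by omega)) fun j _ hj => ?_
    simp only [Finset.mem_range, not_lt] at hj
    simp only [hh]
    by_cases hjl : j ≤ l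
    · rw [if_pos hjl, Nat.choose_eq_zero_of_lt (by omega)]
      simp
    · rw [if_neg hjl]
  have e2 : ∑ k ∈ Finset.range (l+1), (a.choose k : ℝ) * (b.choose (l-k))
      = ∑ j ∈ Finset.range (a+l+2), h j := by
    rw [← Finset.sum_subset (Finset.range_subset_range.2 (show l+1 ≤ a+l+2 by omega))
      (fun j _ hj => ?_)]
    · refine Finset.sum_congr rfl fun k hk => ?_
      simp only [Finset.mem_range] at hk
      simp only [hh]
      rw [if_pos (by omega)]
    · simp only [Finset.mem_range, not_lt] at hj
      simp only [hh]
      rw [if_neg (by omega)]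
  rw [hv, e1, e2]

/-- Hermitian limit `τ = 1` of the subleading coefficients of the symplectic
elliptic Ginibre spectral moments. With `p1, p2 ≥ 1` of the same parity and `p = (p1+p2)/2`:
(a) `∑_{r ∈ I_{min(p1,p2)}} (r/2) binom(p1,(p1+r)/2) binom(p2,(p2+r)/2) = 0`;
(b) `∑_{r ∈ I_{max(p1,p2)}} ∑_{s=1}^{max(p1,p2)} [(p1/(p1+p2)) binom(p1,(p1+r)/2−s) binom(p2,(p2+r)/2)
    + (p2/(p1+p2)) binom(p1,(p1+r)/2) binom(p2,(p2+r)/2−s)] = ∑_{l=0}^{p−1} binom(2p,l)`. -/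
theorem hermitian_limit_subleading (p1 p2 : ℕ) (hp1 : 1 ≤ p1) (hp2 : 1 ≤ p2)
    (hpar : p1 % 2 = p2 % 2) :
    (∑ r ∈ Ip (min p1 p2),
        ((r : ℝ) / 2) * zbinom p1 (((p1 : ℤ) + r) / 2) * zbinom p2 (((p2 : ℤ) + r) / 2) = 0)
    ∧ (∑ r ∈ Ip (max p1 p2), ∑ s ∈ Finset.Icc 1 (max p1 p2),
          (((p1 : ℝ) / ((p1 : ℝ) + p2)) *
              zbinom p1 (((p1 : ℤ) + r) / 2 - (s : ℤ)) * zbinom p2 (((p2 : ℤ) + r) / 2)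
            + ((p2 : ℝ) / ((p1 : ℝ) + p2)) *
              zbinom p1 (((p1 : ℤ) + r) / 2) * zbinom p2 (((p2 : ℤ) + r) / 2 - (s : ℤ)))
        = ∑ l ∈ Finset.range ((p1 + p2) / 2), ((p1 + p2).choose l : ℝ)) := by
  constructor
  · -- part (a): involution r ↦ -r
    refine Finset.sum_involution (fun r _ => -r) ?_ ?_ ?_ ?_
    · intro r hr
      rw [mem_Ip] at hr
      obtain ⟨hb1, hb2, hb3⟩ := hr
      have hrp : r % 2 = (p1:ℤ) % 2 := by
        rcases le_total p1 p2 with h | h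
        · rw [min_eq_left h] at hb3; omega
        · rw [min_eq_right h] at hb3; omega
      have h1 : ((p1:ℤ) + r) % 2 = 0 := by omega
      have h2 : ((p2:ℤ) + r) % 2 = 0 := by omega
      show _ + ((-r : ℤ):ℝ)/2 * zbinom p1 (((p1:ℤ) + -r)/2) * zbinom p2 (((p2:ℤ) + -r)/2) = 0
      rw [show ((p1:ℤ) + -r) = ((p1:ℤ) - r) by ring, show ((p2:ℤ) + -r) = ((p2:ℤ) - r) by ring,
        zbinom_reflect p1 r h1, zbinom_reflect p2 r h2]
      push_cast
      ring
    · intro r hr hfne heq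
      have heq' : -r = r := heq
      have hr0 : r = 0 := by omega
      apply hfne
      rw [hr0]
      norm_num
    · intro r hr
      show -r ∈ Ip (min p1 p2)
      rw [mem_Ip] at hr ⊢
      obtain ⟨hb1, hb2, hb3⟩ := hr
      refine ⟨by omega, by omega, by omega⟩
    · intro r hr
      simp
  · -- part (b)
    have hp1M : p1 ≤ max p1 p2 := le_max_left _ _
    have hp2M : p2 ≤ max p1 p2 := le_max_right _ _
    have hparM1 : p1 % 2 = (max p1 p2) % 2 := by omega
    have hparM2 : p2 % 2 = (max p1 p2) % 2 := by omega
    set M := max p1 p2 with hM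
    set S : ℝ := ∑ j ∈ Finset.range (p1+1), ∑ m ∈ Finset.range (p2+1),
        if 2*j + 2*m < p1 + p2 then (p1.choose j : ℝ) * (p2.choose m) else 0 with hS
    have hT1 : ∑ r ∈ Ip M, ∑ s ∈ Finset.Icc 1 M,
        zbinom p1 (((p1:ℤ)+r)/2 - (s:ℤ)) * zbinom p2 (((p2:ℤ)+r)/2) = S :=
      term_eval p1 p2 M hp1M hp2M hparM1 hparM2
    have hT2 : ∑ r ∈ Ip M, ∑ s ∈ Finset.Icc 1 M,
        zbinom p1 (((p1:ℤ)+r)/2) * zbinom p2 (((p2:ℤ)+r)/2 - (s:ℤ)) = S := by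
      rw [show (∑ r ∈ Ip M, ∑ s ∈ Finset.Icc 1 M,
          zbinom p1 (((p1:ℤ)+r)/2) * zbinom p2 (((p2:ℤ)+r)/2 - (s:ℤ)))
        = ∑ r ∈ Ip M, ∑ s ∈ Finset.Icc 1 M,
          zbinom p2 (((p2:ℤ)+r)/2 - (s:ℤ)) * zbinom p1 (((p1:ℤ)+r)/2) from
        Finset.sum_congr rfl fun r _ => Finset.sum_congr rfl fun s _ => mul_comm _ _]
      rw [term_eval p2 p1 M hp2M hp1M hparM2 hparM1, hS]
      rw [Finset.sum_comm]
      refine Finset.sum_congr rfl fun j _ => Finset.sum_congr rfl fun m _ => ?_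
      have hiff : (2*m + 2*j < p2 + p1) ↔ (2*j + 2*m < p1 + p2) := by omega
      simp only [hiff]
      split_ifs <;> ring
    have hRHS : ∑ l ∈ Finset.range ((p1+p2)/2), ((p1 + p2).choose l : ℝ) = S := by
      simp_rw [choose_eq_double_sum p1 p2]
      rw [Finset.sum_comm, hS]
      refine Finset.sum_congr rfl fun j _ => ?_
      rw [Finset.sum_comm]
      refine Finset.sum_congr rfl fun m _ => ?_
      rw [Finset.sum_ite_eq]
      simp only [Finset.mem_range]
      have hiff : (j + m < (p1+p2)/2) ↔ (2*j + 2*m < p1+p2) := by omega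
      simp only [hiff]
    rw [hRHS]
    simp_rw [mul_assoc]
    simp_rw [Finset.sum_add_distrib]
    simp_rw [← Finset.mul_sum]
    have hT2' : ∑ r ∈ Ip M, zbinom p1 (((p1:ℤ)+r)/2) *
        ∑ s ∈ Finset.Icc 1 M, zbinom p2 (((p2:ℤ)+r)/2 - (s:ℤ)) = S := by
      rw [← hT2]
      exact Finset.sum_congr rfl fun r _ => by rw [Finset.mul_sum]
    rw [hT1, hT2', ← add_mul]
    have hc : (p1:ℝ)/((p1:ℝ)+p2) + (p2:ℝ)/((p1:ℝ)+p2) = 1 := by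
      rw [← add_div, div_self]
      positivity
    rw [hc, one_mul]
end
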